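/- arXiv:math/0002103 — 4 statements merged into one kernel-verified Lean document; each statement's English description precedes it below -/
import Mathlib

section
/- Let (b_n)_{n≥0} be a sequence of nonnegative real numbers such that the power series f(x) = Σ_{n=0}^∞ b_n x^n converges for |x| < 1, and let α > 0. If log b_n ~ 2√(αn) as n → ∞, then log f(x) ~ α/(1−x) as x → 1⁻. -/
open Filter Asymptotics Real Topology
set_option maxHeartbeats 1000000

lemma ab_amgm (A B : ℝ) (hA : 0 ≤ A) (hB : 0 ≤ B) : 2 * Real.sqrt (A*B) ≤ A + B := by
  nlinarith [Real.sq_sqrt hA, Real.sq_sqrt hB, Real.sqrt_nonneg A, Real.sqrt_nonneg B,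
    Real.sqrt_mul hA B, sq_nonneg (Real.sqrt A - Real.sqrt B)]

lemma ab_y_log : Tendsto (fun y : ℝ => y * (-Real.log y)) (𝓝[>](0:ℝ)) (𝓝 0) := by
  have h := tendsto_log_mul_rpow_nhdsGT_zero one_pos
  have h2 : Tendsto (fun y : ℝ => -(Real.log y * y ^ (1:ℝ))) (𝓝[>](0:ℝ)) (𝓝 0) := by
    simpa using h.neg
  refine h2.congr' ?_
  filter_upwards [self_mem_nhdsWithin] with y (hy : 0 < y)
  rw [Real.rpow_one]; ring

lemma ab_one_sub : Tendsto (fun x : ℝ => 1 - x) (𝓝[<](1:ℝ)) (𝓝[>] (0:ℝ)) := by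
  rw [tendsto_nhdsWithin_iff]
  constructor
  · have : Tendsto (fun x : ℝ => 1 - x) (𝓝 (1:ℝ)) (𝓝 (1-1)) :=
      (continuous_const.sub continuous_id).tendsto 1
    simpa using this.mono_left nhdsWithin_le_nhds
  · filter_upwards [self_mem_nhdsWithin] with x (hx : x < 1)
    simpa using hx

lemma ab_slope : Tendsto (fun x : ℝ => (1-x)/(-Real.log x)) (𝓝[<](1:ℝ)) (𝓝 1) := by
  have h : HasDerivAt Real.log 1 1 := by simpa using Real.hasDerivAt_log one_ne_zero
  have h2 := hasDerivAt_iff_tendsto_slope.1 h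
  have h3 : Tendsto (fun x : ℝ => (slope Real.log 1 x)⁻¹) (𝓝[≠](1:ℝ)) (𝓝 1) := by
    simpa using h2.inv₀ one_ne_zero
  have h4 : Tendsto (fun x : ℝ => (slope Real.log 1 x)⁻¹) (𝓝[<](1:ℝ)) (𝓝 1) :=
    h3.mono_left (nhdsWithin_mono _ (fun x hx => ne_of_lt hx))
  refine h4.congr (fun x => ?_)
  rw [slope_def_field, Real.log_one, sub_zero, inv_div, ← neg_div_neg_eq, neg_sub]

lemma ab_tlim : Tendsto (fun x : ℝ => -Real.log x) (𝓝[<](1:ℝ)) (𝓝[>] (0:ℝ)) := by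
  rw [tendsto_nhdsWithin_iff]
  constructor
  · have : Tendsto (fun x : ℝ => -Real.log x) (𝓝 (1:ℝ)) (𝓝 (-Real.log 1)) :=
      ((Real.continuousAt_log one_ne_zero).neg).tendsto
    simpa using this.mono_left nhdsWithin_le_nhds
  · filter_upwards [Ioo_mem_nhdsLT_of_mem (show (1:ℝ) ∈ Set.Ioc 0 1 by norm_num)] with x hx
    simpa using Real.log_neg hx.1 hx.2

lemma ab_third : Tendsto (fun x : ℝ => (1-x) * (-Real.log (-Real.log x))) (𝓝[<](1:ℝ)) (𝓝 0) := by
  have hup : Tendsto (fun x : ℝ => (1-x) * (-Real.log (1-x))) (𝓝[<](1:ℝ)) (𝓝 0) :=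
    ab_y_log.comp ab_one_sub
  refine tendsto_of_tendsto_of_tendsto_of_le_of_le' tendsto_const_nhds hup ?_ ?_
  · filter_upwards [Ioo_mem_nhdsLT_of_mem (show (1:ℝ) ∈ Set.Ioc 0 1 by norm_num),
      ab_tlim.eventually (Ioo_mem_nhdsGT_of_mem (show (0:ℝ) ∈ Set.Ico 0 1 by norm_num))]
      with x hx ht
    have h1 : Real.log (-Real.log x) < 0 := Real.log_neg ht.1 ht.2
    nlinarith [hx.2]
  · filter_upwards [Ioo_mem_nhdsLT_of_mem (show (1:ℝ) ∈ Set.Ioc 0 1 by norm_num)] with x hx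
    have h1x : 0 < 1 - x := by linarith [hx.2]
    have hle : 1 - x ≤ -Real.log x := by
      have := Real.log_le_sub_one_of_pos hx.1; linarith
    have := Real.log_le_log h1x hle
    nlinarith

lemma ab_bbound (b : ℕ → ℝ) (hb : ∀ n, 0 ≤ b n) (α : ℝ) (hα : 0 < α)
    (hbn : (fun n : ℕ => Real.log (b n)) ~[atTop] (fun n : ℕ => 2 * Real.sqrt (α * n)))
    (e : ℝ) (he : 0 < e) (he1 : e < 1) :
    ∀ᶠ n : ℕ in atTop, Real.exp ((1-e)*(2*Real.sqrt (α*(n:ℝ)))) ≤ b n ∧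
      b n ≤ Real.exp ((1+e)*(2*Real.sqrt (α*(n:ℝ)))) := by
  have h1 := (hbn.isLittleO).def he
  filter_upwards [h1, eventually_ge_atTop 1] with n hn hn1
  set S := 2*Real.sqrt (α*(n:ℝ)) with hSdef
  have hS : 0 < S := by
    have : (0:ℝ) < α * n := by
      have : (1:ℝ) ≤ (n:ℝ) := by exact_mod_cast hn1
      nlinarith
    simp only [hSdef]
    positivity
  have hn' : |Real.log (b n) - S| ≤ e * S := by
    simp only [Pi.sub_apply, Real.norm_eq_abs, abs_of_pos hS] at hn
    exact hn
  have habs := abs_le.1 hn'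
  have hlogl : (1-e)*S ≤ Real.log (b n) := by nlinarith [habs.1]
  have hlogu : Real.log (b n) ≤ (1+e)*S := by nlinarith [habs.2]
  have hb1 : 1 < b n := by
    by_contra h
    push_neg at h
    have := Real.log_nonpos (hb n) h
    nlinarith [mul_pos (show (0:ℝ) < 1-e by linarith) hS]
  constructor
  · calc Real.exp ((1-e)*S) ≤ Real.exp (Real.log (b n)) := Real.exp_le_exp.2 hlogl
      _ = b n := Real.exp_log (by linarith)
  · refine le_trans ?_ (Real.exp_le_exp.2 hlogu)
    rcases eq_or_lt_of_le (hb n) with h | h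
    · rw [← h]; positivity
    · rw [Real.exp_log h]

theorem abelian_equivalent (b : ℕ → ℝ) (hb : ∀ n, 0 ≤ b n)
    (hconv : ∀ x : ℝ, |x| < 1 → Summable fun n => b n * x ^ n)
    (α : ℝ) (hα : 0 < α)
    (hbn : (fun n : ℕ => Real.log (b n)) ~[atTop]
      (fun n : ℕ => 2 * Real.sqrt (α * n))) :
    (fun x : ℝ => Real.log (∑' n, b n * x ^ n)) ~[nhdsWithin 1 (Set.Iio 1)]
      (fun x : ℝ => α / (1 - x)) := by
  have hx01 : ∀ᶠ x in 𝓝[<](1:ℝ), x ∈ Set.Ioo (0:ℝ) 1 :=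
    Ioo_mem_nhdsLT_of_mem (show (1:ℝ) ∈ Set.Ioc 0 1 by norm_num)
  -- positivity of the sum
  have hfpos : ∀ᶠ x in 𝓝[<](1:ℝ), 0 < ∑' n, b n * x ^ n := by
    obtain ⟨N, hN⟩ := eventually_atTop.1
      (ab_bbound b hb α hα hbn (1/2) (by norm_num) (by norm_num))
    filter_upwards [hx01] with x hx
    have hsum := hconv x (by rw [abs_of_pos hx.1]; exact hx.2)
    have hbN : 0 < b N := lt_of_lt_of_le (Real.exp_pos _) (hN N le_rfl).1
    have hterm : 0 < b N * x ^ N := mul_pos hbN (pow_pos hx.1 N)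
    exact lt_of_lt_of_le hterm
      (Summable.le_tsum hsum N (fun j _ => mul_nonneg (hb j) (pow_nonneg hx.1.le j)))
  -- lower bound
  have hlow : ∀ c : ℝ, 0 < c → c < 1 → ∀ᶠ x in 𝓝[<](1:ℝ),
      (c^2*α/(-Real.log x) - (-Real.log x)) * (1-x)
        ≤ (1-x) * Real.log (∑' n, b n * x ^ n) := by
    intro c hc hc1
    obtain ⟨N, hN⟩ := eventually_atTop.1
      (ab_bbound b hb α hα hbn (1-c) (by linarith) (by linarith))
    have hceil : Tendsto (fun x : ℝ => c^2*α/(-Real.log x)^2) (𝓝[<](1:ℝ)) atTop := by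
      have hsq : Tendsto (fun x : ℝ => (-Real.log x)^2) (𝓝[<](1:ℝ)) (𝓝[>] (0:ℝ)) := by
        rw [tendsto_nhdsWithin_iff]
        constructor
        · have h0 := ab_tlim.mono_right nhdsWithin_le_nhds
          have := h0.mul h0
          simp only [mul_zero] at this
          exact this.congr (fun x => (sq (-Real.log x)).symm)
        · filter_upwards [ab_tlim.eventually self_mem_nhdsWithin] with x hx
          exact pow_pos hx 2
      have hinv := tendsto_inv_nhdsGT_zero.comp hsq
      have := hinv.const_mul_atTop (show (0:ℝ) < c^2*α by positivity)
      refine this.congr (fun x => ?_)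
      simp [div_eq_mul_inv, Function.comp]
    have hNbig : ∀ᶠ x in 𝓝[<](1:ℝ), N ≤ ⌈c^2*α/(-Real.log x)^2⌉₊ := by
      filter_upwards [hceil.eventually (eventually_ge_atTop (N:ℝ))] with x hx
      exact Nat.cast_le.1 (le_trans hx (Nat.le_ceil _))
    filter_upwards [hx01, hNbig, ab_tlim.eventually self_mem_nhdsWithin] with x hx hNx ht
    have ht0 : (0:ℝ) < -Real.log x := ht
    set t := -Real.log x with htdef
    set m := ⌈c^2*α/t^2⌉₊ with hmdef
    have hcm : c^2*α/t^2 ≤ (m:ℝ) := Nat.le_ceil _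
    have hcm2 : (m:ℝ) < c^2*α/t^2 + 1 := Nat.ceil_lt_add_one (by positivity)
    have hbml : Real.exp (c*(2*Real.sqrt (α*(m:ℝ)))) ≤ b m := by
      have h := (hN m hNx).1
      rwa [show (1:ℝ)-(1-c) = c by ring] at h
    have hbmpos : 0 < b m := lt_of_lt_of_le (Real.exp_pos _) hbml
    have hxm : 0 < x ^ m := pow_pos hx.1 m
    have hsum := hconv x (by rw [abs_of_pos hx.1]; exact hx.2)
    have hfm : b m * x ^ m ≤ ∑' n, b n * x ^ n :=
      Summable.le_tsum hsum m (fun j _ => mul_nonneg (hb j) (pow_nonneg hx.1.le j))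
    have hlog1 : Real.log (b m * x^m) ≤ Real.log (∑' n, b n * x ^ n) :=
      Real.log_le_log (by positivity) hfm
    have hlog2 : Real.log (b m * x^m) = Real.log (b m) + (m:ℝ) * Real.log x := by
      rw [Real.log_mul (ne_of_gt hbmpos) (ne_of_gt hxm), Real.log_pow]
    have hlogbm : c*(2*Real.sqrt (α*(m:ℝ))) ≤ Real.log (b m) := by
      calc c*(2*Real.sqrt (α*(m:ℝ)))
          = Real.log (Real.exp (c*(2*Real.sqrt (α*(m:ℝ))))) := (Real.log_exp _).symm
        _ ≤ Real.log (b m) := Real.log_le_log (Real.exp_pos _) hbml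
    have hsqrt : c*α/t ≤ Real.sqrt (α*(m:ℝ)) := by
      have h1 : (c*α/t)^2 ≤ α*(m:ℝ) := by
        have h2 := mul_le_mul_of_nonneg_left hcm hα.le
        calc (c*α/t)^2 = α * (c^2*α/t^2) := by field_simp
          _ ≤ α * (m:ℝ) := h2
      calc c*α/t = Real.sqrt ((c*α/t)^2) := (Real.sqrt_sq (by positivity)).symm
        _ ≤ Real.sqrt (α*(m:ℝ)) := Real.sqrt_le_sqrt h1
    have hkey : c^2*α/t - t ≤ Real.log (∑' n, b n * x ^ n) := by
      have h2 : 2*c^2*α/t ≤ c*(2*Real.sqrt (α*(m:ℝ))) := by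
        have h3 := mul_le_mul_of_nonneg_left hsqrt (show (0:ℝ) ≤ 2*c by linarith)
        calc 2*c^2*α/t = 2*c*(c*α/t) := by ring
          _ ≤ 2*c*Real.sqrt (α*(m:ℝ)) := h3
          _ = c*(2*Real.sqrt (α*(m:ℝ))) := by ring
      have h3 : (m:ℝ) * t ≤ (c^2*α/t^2 + 1) * t := mul_le_mul_of_nonneg_right hcm2.le ht0.le
      have h4 : Real.log x = -t := by rw [htdef]; ring
      have hid : (c^2*α/t^2+1)*t = c^2*α/t + t := by field_simp
      rw [h4] at hlog2
      have hA : Real.log (b m) - (m:ℝ)*t ≤ Real.log (∑' n, b n * x ^ n) := by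
        rw [hlog2] at hlog1; linarith [hlog1]
      have hB : 2*c^2*α/t - (c^2*α/t + t) ≤ Real.log (b m) - (m:ℝ)*t := by
        rw [← hid]; linarith [hlogbm, h2, h3]
      have hC : 2*c^2*α/t - (c^2*α/t + t) = c^2*α/t - t := by ring
      exact le_trans (hC ▸ hB) hA
    have h1x : (0:ℝ) ≤ 1 - x := by linarith [hx.2]
    calc (c^2*α/t - t) * (1-x) = (1-x)*(c^2*α/t - t) := by ring
      _ ≤ (1-x) * Real.log (∑' n, b n * x ^ n) := mul_le_mul_of_nonneg_left hkey h1x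
  -- lower comparison function tends to c^2 α
  have hglow : ∀ c : ℝ, Tendsto (fun x : ℝ => (c^2*α/(-Real.log x) - (-Real.log x)) * (1-x))
      (𝓝[<](1:ℝ)) (𝓝 (c^2*α)) := by
    intro c
    have h1 : Tendsto (fun x : ℝ => c^2*α*((1-x)/(-Real.log x))) (𝓝[<](1:ℝ)) (𝓝 (c^2*α*1)) :=
      ab_slope.const_mul _
    have h2 : Tendsto (fun x : ℝ => (-Real.log x)*(1-x)) (𝓝[<](1:ℝ)) (𝓝 0) := by
      have ha := ab_tlim.mono_right nhdsWithin_le_nhds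
      have hb2 : Tendsto (fun x : ℝ => (1-x)) (𝓝[<](1:ℝ)) (𝓝 0) := by
        simpa using ab_one_sub.mono_right nhdsWithin_le_nhds
      simpa using ha.mul hb2
    have h3 := h1.sub h2
    simp only [mul_one, sub_zero] at h3
    refine h3.congr (fun x => ?_)
    ring
  -- upper bound
  have hup : ∀ e : ℝ, 0 < e → e < 1/2 → ∃ D : ℝ, ∀ᶠ x in 𝓝[<](1:ℝ),
      (1-x) * Real.log (∑' n, b n * x ^ n) ≤ (1-x)*D
        + ((1+e)^2*α/(1-e)) * ((1-x)/(-Real.log x))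
        + (1-x)*(-Real.log (-Real.log x)) := by
    intro e he he2
    obtain ⟨N, hN⟩ := eventually_atTop.1 (ab_bbound b hb α hα hbn e he (by linarith))
    set C := ∑ i ∈ Finset.range N, b i with hCdef
    have hC0 : 0 ≤ C := Finset.sum_nonneg (fun i _ => hb i)
    refine ⟨Real.log ((C+1)*(2/e)), ?_⟩
    filter_upwards [hx01, hfpos,
      ab_tlim.eventually (Ioo_mem_nhdsGT_of_mem (show (0:ℝ) ∈ Set.Ico 0 1 by norm_num))]
      with x hx hfx ht
    set t := -Real.log x with htdef
    have ht0 : 0 < t := ht.1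
    have ht1 : t < 1 := ht.2
    have he1 : (0:ℝ) < 1 - e := by linarith
    set K := (1+e)^2*α/(1-e) with hKdef
    have hK0 : 0 < K := by positivity
    have hsum := hconv x (by rw [abs_of_pos hx.1]; exact hx.2)
    set r := Real.exp (-(e*t)) with hrdef
    have hr0 : 0 < r := Real.exp_pos _
    have hr1 : r < 1 := by
      rw [hrdef, show (1:ℝ) = Real.exp 0 by simp]
      exact Real.exp_lt_exp.2 (by nlinarith)
    have het : 0 < e*t := mul_pos he ht0
    have hu1 : e*t ≤ 1 := by nlinarith
    -- term bound
    have hterm : ∀ n : ℕ, b (n+N) * x^(n+N) ≤ Real.exp (K/t) * r^n := by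
      intro n
      have hxpow : x^(n+N) = Real.exp (-(t*((n:ℝ)+(N:ℝ)))) := by
        conv_lhs => rw [← Real.exp_log hx.1]
        rw [← Real.exp_nat_mul]
        congr 1
        rw [htdef]; push_cast; ring
      have hm0 : (0:ℝ) ≤ α*((n:ℝ)+(N:ℝ)) := by positivity
      have hsq : (1+e)*Real.sqrt (α*((n:ℝ)+(N:ℝ)))
          = Real.sqrt ((1+e)^2*(α*((n:ℝ)+(N:ℝ)))) := by
        rw [Real.sqrt_mul (show (0:ℝ) ≤ (1+e)^2 by positivity) (α*((n:ℝ)+(N:ℝ))),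
          Real.sqrt_sq (show (0:ℝ) ≤ 1+e by positivity)]
      have hAB := ab_amgm (K/t) ((1-e)*t*((n:ℝ)+(N:ℝ))) (by positivity) (by positivity)
      have hABeq : K/t * ((1-e)*t*((n:ℝ)+(N:ℝ))) = (1+e)^2*(α*((n:ℝ)+(N:ℝ))) := by
        rw [hKdef]; field_simp
      rw [hABeq] at hAB
      have hexp_ineq : (1+e)*(2*Real.sqrt (α*((n:ℝ)+(N:ℝ)))) - t*((n:ℝ)+(N:ℝ))
          ≤ K/t - e*t*(n:ℝ) := by
        have h5 : 2*((1+e)*Real.sqrt (α*((n:ℝ)+(N:ℝ))))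
            ≤ K/t + (1-e)*t*((n:ℝ)+(N:ℝ)) := by
          rw [hsq]; exact hAB
        have h6 : e*t*(n:ℝ) ≤ e*t*((n:ℝ)+(N:ℝ)) := by
          have : (n:ℝ) ≤ (n:ℝ)+(N:ℝ) := by
            have := Nat.cast_nonneg (α := ℝ) N; linarith
          exact mul_le_mul_of_nonneg_left this het.le
        nlinarith
      have hbnd := (hN (n+N) (by omega)).2
      calc b (n+N) * x^(n+N)
          ≤ Real.exp ((1+e)*(2*Real.sqrt (α*((n+N:ℕ):ℝ)))) * x^(n+N) :=
            mul_le_mul_of_nonneg_right hbnd (pow_nonneg hx.1.le _)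
        _ = Real.exp ((1+e)*(2*Real.sqrt (α*((n:ℝ)+(N:ℝ)))) - t*((n:ℝ)+(N:ℝ))) := by
            rw [hxpow, ← Real.exp_add]
            congr 2
            push_cast; ring
        _ ≤ Real.exp (K/t - e*t*(n:ℝ)) := Real.exp_le_exp.2 hexp_ineq
        _ = Real.exp (K/t) * r^n := by
            rw [hrdef, ← Real.exp_nat_mul, ← Real.exp_add]
            congr 1
            ring
    have hsum2 : Summable (fun n : ℕ => b (n+N) * x^(n+N)) := (summable_nat_add_iff N).2 hsum
    have hgeo : Summable (fun n : ℕ => Real.exp (K/t) * r^n) :=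
      (summable_geometric_of_lt_one hr0.le hr1).mul_left _
    have htail : ∑' n : ℕ, b (n+N) * x^(n+N) ≤ Real.exp (K/t) * (1-r)⁻¹ := by
      calc ∑' n : ℕ, b (n+N) * x^(n+N) ≤ ∑' n : ℕ, Real.exp (K/t) * r^n :=
            Summable.tsum_le_tsum hterm hsum2 hgeo
        _ = Real.exp (K/t) * (1-r)⁻¹ := by
            rw [tsum_mul_left, tsum_geometric_of_lt_one hr0.le hr1]
    have hhead : ∑ i ∈ Finset.range N, b i * x^i ≤ C := by
      refine Finset.sum_le_sum (fun i _ => ?_)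
      have := pow_le_one₀ hx.1.le hx.2.le (n := i)
      nlinarith [hb i, pow_nonneg hx.1.le i]
    have hinvr : (1-r)⁻¹ ≤ 2/(e*t) := by
      have h1 : e*t/2 ≤ 1 - r := by
        have h3 : r * (1+e*t) ≤ 1 := by
          have h2 : 1 + e*t ≤ Real.exp (e*t) := by linarith [Real.add_one_le_exp (e*t)]
          have h4 : r * (1+e*t) ≤ r * Real.exp (e*t) := mul_le_mul_of_nonneg_left h2 hr0.le
          have h5 : r * Real.exp (e*t) = 1 := by
            rw [hrdef, ← Real.exp_add]; simp
          linarith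
        nlinarith
      calc (1-r)⁻¹ ≤ (e*t/2)⁻¹ := inv_anti₀ (by positivity) h1
        _ = 2/(e*t) := by rw [inv_div]
    have hsplit := (Summable.sum_add_tsum_nat_add N hsum).symm
    have hftotal : ∑' n, b n * x ^ n ≤ ((C+1)*(2/e)) * (Real.exp (K/t) * t⁻¹) := by
      have hmain : ∑' n, b n * x ^ n ≤ C + Real.exp (K/t) * (2/(e*t)) := by
        have h7 : Real.exp (K/t) * (1-r)⁻¹ ≤ Real.exp (K/t) * (2/(e*t)) :=
          mul_le_mul_of_nonneg_left hinvr (Real.exp_pos _).le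
        rw [hsplit]
        have := add_le_add hhead (le_trans htail h7)
        linarith
      have h2et : (1:ℝ) ≤ 2/(e*t) := by rw [le_div_iff₀ het]; nlinarith
      have hexp1 : (1:ℝ) ≤ Real.exp (K/t) := Real.one_le_exp (by positivity)
      have hE : (1:ℝ) ≤ Real.exp (K/t) * (2/(e*t)) := by nlinarith
      have hstep : C + Real.exp (K/t)*(2/(e*t)) ≤ (C+1)*(Real.exp (K/t)*(2/(e*t))) := by
        nlinarith
      have hEeq : (C+1)*(Real.exp (K/t)*(2/(e*t))) = ((C+1)*(2/e))*(Real.exp (K/t)*t⁻¹) := by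
        field_simp
      linarith [hEeq ▸ hstep, hmain]
    have hQ1 : (0:ℝ) < (C+1)*(2/e) := by positivity
    have hQ2 : (0:ℝ) < Real.exp (K/t) * t⁻¹ := by positivity
    have hlogf : Real.log (∑' n, b n * x ^ n)
        ≤ Real.log ((C+1)*(2/e)) + K/t + (-Real.log t) := by
      have h1 := Real.log_le_log hfx hftotal
      rw [Real.log_mul (ne_of_gt hQ1) (ne_of_gt hQ2),
        Real.log_mul (ne_of_gt (Real.exp_pos _)) (by positivity),
        Real.log_exp, Real.log_inv] at h1
      linarith
    have h1x : (0:ℝ) ≤ 1-x := by linarith [hx.2]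
    calc (1-x) * Real.log (∑' n, b n * x ^ n)
        ≤ (1-x)*(Real.log ((C+1)*(2/e)) + K/t + (-Real.log t)) :=
          mul_le_mul_of_nonneg_left hlogf h1x
      _ = (1-x)*Real.log ((C+1)*(2/e)) + K*((1-x)/t) + (1-x)*(-Real.log t) := by ring
  -- the upper comparison tends to K
  have hgup : ∀ e D : ℝ, Tendsto (fun x : ℝ => (1-x)*D
      + ((1+e)^2*α/(1-e))*((1-x)/(-Real.log x))
      + (1-x)*(-Real.log (-Real.log x))) (𝓝[<](1:ℝ)) (𝓝 ((1+e)^2*α/(1-e))) := by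
    intro e D
    have h1 : Tendsto (fun x : ℝ => (1-x)*D) (𝓝[<](1:ℝ)) (𝓝 0) := by
      have hb2 : Tendsto (fun x : ℝ => (1-x)) (𝓝[<](1:ℝ)) (𝓝 0) := by
        simpa using ab_one_sub.mono_right nhdsWithin_le_nhds
      simpa using hb2.mul_const D
    have h2 := ab_slope.const_mul ((1+e)^2*α/(1-e))
    have h4 := (h1.add h2).add ab_third
    simpa using h4
  -- main limit statement
  have T : Tendsto (fun x : ℝ => (1-x) * Real.log (∑' n, b n * x ^ n))
      (𝓝[<](1:ℝ)) (𝓝 α) := by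
    rw [Metric.tendsto_nhds]
    intro ε hε
    set e := min (ε/(9*α)) (1/5) with he_def
    have he0 : 0 < e := lt_min (by positivity) (by norm_num)
    have he5 : e ≤ 1/5 := min_le_right _ _
    have heε : α * e ≤ ε/9 := by
      have h1 : e ≤ ε/(9*α) := min_le_left _ _
      rw [le_div_iff₀ (by positivity)] at h1
      nlinarith
    have hc0 : 0 < 1 - e := by linarith
    have hc1 : 1 - e < 1 := by linarith
    have hlow1 := hlow (1-e) hc0 hc1
    have hglow1 := (hglow (1-e)).eventually
      (lt_mem_nhds (show α - ε < (1-e)^2*α by nlinarith))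
    obtain ⟨D, hupD⟩ := hup e he0 (by linarith)
    have hgup1 := (hgup e D).eventually (gt_mem_nhds (show (1+e)^2*α/(1-e) < α + ε by
      rw [div_lt_iff₀ hc0]; nlinarith))
    filter_upwards [hlow1, hglow1, hupD, hgup1] with x h1 h2 h3 h4
    rw [Real.dist_eq, abs_lt]
    constructor <;> linarith
  -- convert to IsEquivalent
  have hvne : ∀ᶠ x in 𝓝[<](1:ℝ), α/(1-x) ≠ 0 := by
    filter_upwards [self_mem_nhdsWithin] with x (hx : x < 1)
    exact div_ne_zero (ne_of_gt hα) (by intro h; rw [sub_eq_zero] at h; linarith)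
  rw [isEquivalent_iff_tendsto_one hvne]
  have hT2 : Tendsto (fun x : ℝ => ((1-x)*Real.log (∑' n, b n * x ^ n))/α)
      (𝓝[<](1:ℝ)) (𝓝 (α/α)) := T.div_const α
  rw [div_self (ne_of_gt hα)] at hT2
  refine hT2.congr' ?_
  filter_upwards [self_mem_nhdsWithin] with x (hx : x < 1)
  simp only [Pi.div_apply]
  rw [div_div_eq_mul_div, mul_comm]
end

section
/- Let (b_n)_{n≥0} be a sequence of nonnegative real numbers such that the power series f(x) = Σ_{n=0}^∞ b_n x^n converges for |x| < 1, and let S_B(n) = Σ_{k=0}^n b_k. Let c > 0. If f(x) ~ c/(1−x) as x → 1⁻, then S_B(n) ~ cn as n → ∞. -/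
open Filter Asymptotics Real

noncomputable def xx (N : ℕ) : ℝ := Real.exp (-(N:ℝ)⁻¹)
noncomputable def gg (t : ℝ) : ℝ := if Real.exp (-1) ≤ t then t⁻¹ else 0

-- L1: summability of monomial-weighted series
lemma tb_summable (b : ℕ → ℝ) (hconv : ∀ x : ℝ, |x| < 1 → Summable fun n => b n * x ^ n)
    {x : ℝ} (hx0 : 0 < x) (hx1 : x < 1) (j : ℕ) :
    Summable (fun n => b n * x ^ n * (x ^ n) ^ j) := by
  have h : |x ^ (j+1)| < 1 := by
    rw [abs_pow, abs_of_pos hx0]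
    exact pow_lt_one₀ hx0.le hx1 (Nat.succ_ne_zero j)
  have := hconv _ h
  convert this using 2 with n
  ring

-- base: (1-x) f(x) → c as x → 1⁻
lemma tb_base (b : ℕ → ℝ) (c : ℝ) (hc : 0 < c)
    (hf : (fun x : ℝ => ∑' n, b n * x ^ n) ~[nhdsWithin 1 (Set.Iio 1)]
      (fun x : ℝ => c / (1 - x))) :
    Tendsto (fun x : ℝ => (1 - x) * ∑' n, b n * x ^ n) (nhdsWithin 1 (Set.Iio 1)) (nhds c) := by
  have hz : ∀ᶠ x : ℝ in nhdsWithin 1 (Set.Iio 1), c / (1 - x) ≠ 0 := by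
    filter_upwards [self_mem_nhdsWithin] with x hx
    have : (1:ℝ) - x ≠ 0 := by
      have : x < 1 := hx
      linarith
    exact div_ne_zero hc.ne' this
  have h1 : Tendsto (fun x : ℝ => (∑' n, b n * x ^ n) / (c / (1 - x)))
      (nhdsWithin 1 (Set.Iio 1)) (nhds 1) := by
    have := (isEquivalent_iff_tendsto_one hz).mp hf
    exact this
  have h2 := h1.const_mul c
  rw [mul_one] at h2
  refine h2.congr' ?_
  filter_upwards [self_mem_nhdsWithin] with x hx
  have hx1 : (1:ℝ) - x ≠ 0 := by
    have : x < 1 := hx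
    linarith
  field_simp

lemma tb_ev_pos : ∀ᶠ x : ℝ in nhdsWithin 1 (Set.Iio 1), 0 < x ∧ x < 1 := by
  have h1 : ∀ᶠ x : ℝ in nhdsWithin 1 (Set.Iio 1), 0 < x :=
    eventually_nhdsWithin_of_eventually_nhds (eventually_gt_nhds one_pos)
  filter_upwards [h1, self_mem_nhdsWithin] with x h1 h2
  exact ⟨h1, h2⟩

-- L2: monomial limit along x → 1⁻
lemma tb_mono_lim (b : ℕ → ℝ) (c : ℝ) (hc : 0 < c)
    (hconv : ∀ x : ℝ, |x| < 1 → Summable fun n => b n * x ^ n)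
    (hf : (fun x : ℝ => ∑' n, b n * x ^ n) ~[nhdsWithin 1 (Set.Iio 1)]
      (fun x : ℝ => c / (1 - x))) (j : ℕ) :
    Tendsto (fun x : ℝ => (1 - x) * ∑' n, b n * x ^ n * (x ^ n) ^ j)
      (nhdsWithin 1 (Set.Iio 1)) (nhds (c / (j + 1))) := by
  have hbase := tb_base b c hc hf
  -- x ↦ x^(j+1) maps the filter to itself
  have hpow : Tendsto (fun x : ℝ => x ^ (j+1)) (nhdsWithin 1 (Set.Iio 1))
      (nhdsWithin 1 (Set.Iio 1)) := by
    apply tendsto_nhdsWithin_of_tendsto_nhds_of_eventually_within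
    · have : Tendsto (fun x : ℝ => x ^ (j+1)) (nhds 1) (nhds (1 ^ (j+1))) :=
        (continuous_pow (j+1)).tendsto 1
      rw [one_pow] at this
      exact this.mono_left nhdsWithin_le_nhds
    · filter_upwards [tb_ev_pos] with x hx
      exact pow_lt_one₀ hx.1.le hx.2 (Nat.succ_ne_zero j)
  have hcomp : Tendsto (fun x : ℝ => (1 - x ^ (j+1)) * ∑' n, b n * (x ^ (j+1)) ^ n)
      (nhdsWithin 1 (Set.Iio 1)) (nhds c) := hbase.comp hpow
  -- geometric ratio
  have hgeom : Tendsto (fun x : ℝ => (∑ i ∈ Finset.range (j+1), x ^ i)⁻¹)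
      (nhdsWithin 1 (Set.Iio 1)) (nhds ((j+1 : ℝ))⁻¹) := by
    have hcont : Tendsto (fun x : ℝ => ∑ i ∈ Finset.range (j+1), x ^ i)
        (nhds 1) (nhds (∑ i ∈ Finset.range (j+1), (1:ℝ) ^ i)) := by
      exact (continuous_finset_sum _ (fun i _ => continuous_pow i)).tendsto 1
    simp only [one_pow, Finset.sum_const, Finset.card_range, nsmul_eq_mul, mul_one] at hcont
    have h2 : Tendsto (fun x : ℝ => ∑ i ∈ Finset.range (j+1), x ^ i)
        (nhdsWithin 1 (Set.Iio 1)) (nhds ((j:ℝ)+1)) := by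
      have := hcont.mono_left (nhdsWithin_le_nhds (s := Set.Iio 1))
      convert this using 2
      push_cast
      try ring
    have := h2.inv₀ (by positivity)
    have e : ((j+1 : ℝ)) = ((j:ℝ)+1) := by push_cast; ring
    rw [e]
    exact this
  have := hcomp.mul hgeom
  rw [show c * ((j:ℝ)+1)⁻¹ = c / (j+1) by rw [div_eq_mul_inv]] at this
  refine this.congr' ?_
  filter_upwards [tb_ev_pos] with x hx
  have hs : (∑ i ∈ Finset.range (j+1), x ^ i) * (1 - x) = 1 - x ^ (j+1) := by
    have := geom_sum_mul x (j+1)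
    linarith [this]
  have hspos : 0 < ∑ i ∈ Finset.range (j+1), x ^ i := by
    apply Finset.sum_pos (fun i _ => pow_pos hx.1 i)
    exact Finset.nonempty_range_iff.mpr (Nat.succ_ne_zero j)
  have hterm : ∀ n : ℕ, b n * (x ^ (j+1)) ^ n = b n * x ^ n * (x ^ n) ^ j := by
    intro n; ring
  rw [tsum_congr hterm]
  rw [← hs]
  field_simp
  try ring

lemma tb_xx_pos (N : ℕ) : 0 < xx N := Real.exp_pos _

lemma tb_xx_lt_one {N : ℕ} (hN : 1 ≤ N) : xx N < 1 := by
  rw [xx, Real.exp_lt_one_iff]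
  simp only [Left.neg_neg_iff]
  positivity

lemma tb_xx_tendsto : Tendsto xx atTop (nhdsWithin 1 (Set.Iio 1)) := by
  apply tendsto_nhdsWithin_of_tendsto_nhds_of_eventually_within
  · have h1 : Tendsto (fun N : ℕ => -((N:ℝ)⁻¹)) atTop (nhds 0) := by
      have := (tendsto_natCast_atTop_atTop (R := ℝ)).inv_tendsto_atTop
      have := this.neg
      rwa [neg_zero] at this
    have := (Real.continuous_exp.tendsto 0).comp h1
    rw [Real.exp_zero] at this
    exact this
  · filter_upwards [eventually_ge_atTop 1] with N hN
    exact tb_xx_lt_one hN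

-- x_N ^ n = exp(-(n/N))
lemma tb_xx_pow (N n : ℕ) : (xx N) ^ n = Real.exp (-((n:ℝ) * (N:ℝ)⁻¹)) := by
  rw [xx, ← Real.exp_nat_mul]
  ring_nf

lemma tb_xx_pow_le_one (N n : ℕ) : (xx N) ^ n ≤ 1 := by
  rw [tb_xx_pow, Real.exp_le_one_iff]
  simp only [Left.neg_nonpos_iff]
  positivity

-- n ≤ N ↔ exp(-1) ≤ x_N^n  (for N ≥ 1)
lemma tb_cutoff {N : ℕ} (hN : 1 ≤ N) (n : ℕ) :
    Real.exp (-1) ≤ (xx N) ^ n ↔ n ≤ N := by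
  rw [tb_xx_pow, Real.exp_le_exp]
  have hNpos : (0:ℝ) < N := by exact_mod_cast hN
  rw [neg_le_neg_iff, mul_inv_le_iff₀ hNpos, one_mul]
  exact_mod_cast Iff.rfl

lemma tb_mono_seq (b : ℕ → ℝ) (c : ℝ) (hc : 0 < c)
    (hconv : ∀ x : ℝ, |x| < 1 → Summable fun n => b n * x ^ n)
    (hf : (fun x : ℝ => ∑' n, b n * x ^ n) ~[nhdsWithin 1 (Set.Iio 1)]
      (fun x : ℝ => c / (1 - x))) (j : ℕ) :
    Tendsto (fun N : ℕ => (1 - xx N) * ∑' n, b n * (xx N) ^ n * ((xx N) ^ n) ^ j)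
      atTop (nhds (c / (j + 1))) :=
  (tb_mono_lim b c hc hconv hf j).comp tb_xx_tendsto

lemma tb_poly_seq (b : ℕ → ℝ) (c : ℝ) (hc : 0 < c)
    (hconv : ∀ x : ℝ, |x| < 1 → Summable fun n => b n * x ^ n)
    (hf : (fun x : ℝ => ∑' n, b n * x ^ n) ~[nhdsWithin 1 (Set.Iio 1)]
      (fun x : ℝ => c / (1 - x))) (p : Polynomial ℝ) :
    Tendsto (fun N : ℕ => (1 - xx N) * ∑' n, b n * (xx N) ^ n * p.eval ((xx N) ^ n))
      atTop (nhds (c * ∫ t in (0:ℝ)..1, p.eval t)) := by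
  set d := p.natDegree + 1 with hd
  set a := p.coeff with ha
  -- the integral
  have hint : (∫ t in (0:ℝ)..1, p.eval t) = ∑ j ∈ Finset.range d, a j * (1 / (j + 1)) := by
    have h1 : (∫ t in (0:ℝ)..1, p.eval t)
        = ∫ t in (0:ℝ)..1, ∑ j ∈ Finset.range d, a j * t ^ j := by
      apply intervalIntegral.integral_congr
      intro t _
      simpa using p.eval_eq_sum_range t
    rw [h1, intervalIntegral.integral_finset_sum]
    · apply Finset.sum_congr rfl
      intro j _
      rw [intervalIntegral.integral_const_mul, integral_pow]
      norm_num
    · intro j _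
      exact ((continuous_const.mul (continuous_pow j)).intervalIntegrable 0 1)
  rw [hint]
  -- pointwise rewrite to a finite sum of monomial limits
  have hmain : Tendsto (fun N : ℕ => ∑ j ∈ Finset.range d,
        a j * ((1 - xx N) * ∑' n, b n * (xx N) ^ n * ((xx N) ^ n) ^ j))
      atTop (nhds (∑ j ∈ Finset.range d, a j * (c / (j + 1)))) := by
    apply tendsto_finset_sum
    intro j _
    exact (tb_mono_seq b c hc hconv hf j).const_mul (a j)
  have htarget : (∑ j ∈ Finset.range d, a j * (c / (j + 1)))
      = c * ∑ j ∈ Finset.range d, a j * (1 / (j + 1)) := by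
    rw [Finset.mul_sum]
    apply Finset.sum_congr rfl
    intro j _; ring
  rw [htarget] at hmain
  refine hmain.congr' ?_
  filter_upwards [eventually_ge_atTop 1] with N hN
  have hx0 := tb_xx_pos N
  have hx1 := tb_xx_lt_one hN
  have h1 : ∀ n : ℕ, b n * (xx N) ^ n * p.eval ((xx N) ^ n)
      = ∑ j ∈ Finset.range d, a j * (b n * (xx N) ^ n * ((xx N) ^ n) ^ j) := by
    intro n
    rw [Polynomial.eval_eq_sum_range, Finset.mul_sum]
    apply Finset.sum_congr rfl
    intro j _; ring
  rw [tsum_congr h1, Summable.tsum_finsetSum (fun j _ => (tb_summable b hconv hx0 hx1 j).mul_left (a j)),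
    Finset.mul_sum]
  apply Finset.sum_congr rfl
  intro j _
  rw [tsum_mul_left]
  ring

lemma tb_indicator_summable (b : ℕ → ℝ) (N : ℕ) :
    Summable (fun n : ℕ => if n ≤ N then b n else 0) := by
  apply summable_of_ne_finset_zero (s := Finset.range (N+1))
  intro n hn
  rw [Finset.mem_range, Nat.lt_succ_iff, not_le] at hn
  rw [if_neg (by omega)]

lemma tb_indicator_tsum (b : ℕ → ℝ) (N : ℕ) :
    (∑' n : ℕ, if n ≤ N then b n else 0) = ∑ k ∈ Finset.range (N+1), b k := by
  rw [tsum_eq_sum (s := Finset.range (N+1))]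
  · apply Finset.sum_congr rfl
    intro k hk
    rw [Finset.mem_range, Nat.lt_succ_iff] at hk
    rw [if_pos hk]
  · intro n hn
    rw [Finset.mem_range, Nat.lt_succ_iff, not_le] at hn
    rw [if_neg (by omega)]

lemma tb_sandwich_low (b : ℕ → ℝ) (hb : ∀ n, 0 ≤ b n) {N : ℕ} (hN : 1 ≤ N)
    (p : ℝ → ℝ) (hp : ∀ t ∈ Set.Icc (0:ℝ) 1, p t ≤ gg t)
    (hsum : Summable (fun n => b n * (xx N) ^ n * p ((xx N) ^ n))) :
    (∑' n, b n * (xx N) ^ n * p ((xx N) ^ n)) ≤ ∑ k ∈ Finset.range (N+1), b k := by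
  rw [← tb_indicator_tsum b N]
  apply Summable.tsum_le_tsum _ hsum (tb_indicator_summable b N)
  intro n
  have ht0 : 0 < (xx N) ^ n := pow_pos (tb_xx_pos N) n
  have ht1 : (xx N) ^ n ≤ 1 := tb_xx_pow_le_one N n
  have hple := hp _ (Set.mem_Icc.mpr ⟨ht0.le, ht1⟩)
  have hbx : 0 ≤ b n * (xx N) ^ n := mul_nonneg (hb n) ht0.le
  by_cases hcase : n ≤ N
  · rw [if_pos hcase]
    have hg : gg ((xx N) ^ n) = ((xx N) ^ n)⁻¹ := by
      rw [gg, if_pos ((tb_cutoff hN n).mpr hcase)]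
    calc b n * (xx N) ^ n * p ((xx N) ^ n) ≤ b n * (xx N) ^ n * ((xx N) ^ n)⁻¹ := by
          rw [← hg]; exact mul_le_mul_of_nonneg_left hple hbx
      _ = b n := by field_simp
  · rw [if_neg hcase]
    have hg : gg ((xx N) ^ n) = 0 := by
      rw [gg, if_neg]
      intro hcon
      exact hcase ((tb_cutoff hN n).mp hcon)
    calc b n * (xx N) ^ n * p ((xx N) ^ n) ≤ b n * (xx N) ^ n * gg ((xx N) ^ n) :=
          mul_le_mul_of_nonneg_left hple hbx
      _ = 0 := by rw [hg, mul_zero]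

lemma tb_sandwich_high (b : ℕ → ℝ) (hb : ∀ n, 0 ≤ b n) {N : ℕ} (hN : 1 ≤ N)
    (P : ℝ → ℝ) (hP : ∀ t ∈ Set.Icc (0:ℝ) 1, gg t ≤ P t)
    (hsum : Summable (fun n => b n * (xx N) ^ n * P ((xx N) ^ n))) :
    (∑ k ∈ Finset.range (N+1), b k) ≤ ∑' n, b n * (xx N) ^ n * P ((xx N) ^ n) := by
  rw [← tb_indicator_tsum b N]
  apply Summable.tsum_le_tsum _ (tb_indicator_summable b N) hsum
  intro n
  have ht0 : 0 < (xx N) ^ n := pow_pos (tb_xx_pos N) n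
  have ht1 : (xx N) ^ n ≤ 1 := tb_xx_pow_le_one N n
  have hple := hP _ (Set.mem_Icc.mpr ⟨ht0.le, ht1⟩)
  have hbx : 0 ≤ b n * (xx N) ^ n := mul_nonneg (hb n) ht0.le
  by_cases hcase : n ≤ N
  · rw [if_pos hcase]
    have hg : gg ((xx N) ^ n) = ((xx N) ^ n)⁻¹ := by
      rw [gg, if_pos ((tb_cutoff hN n).mpr hcase)]
    calc b n = b n * (xx N) ^ n * ((xx N) ^ n)⁻¹ := by field_simp
      _ ≤ b n * (xx N) ^ n * P ((xx N) ^ n) := by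
          rw [← hg]; exact mul_le_mul_of_nonneg_left hple hbx
  · rw [if_neg hcase]
    have hg : gg ((xx N) ^ n) = 0 := by
      rw [gg, if_neg]
      intro hcon
      exact hcase ((tb_cutoff hN n).mp hcon)
    calc (0:ℝ) = b n * (xx N) ^ n * gg ((xx N) ^ n) := by rw [hg, mul_zero]
      _ ≤ b n * (xx N) ^ n * P ((xx N) ^ n) := mul_le_mul_of_nonneg_left hple hbx

section sandwich

-- lower polynomial
lemma tb_exists_poly_low (η : ℝ) (hη : 0 < η) :
    ∃ p : Polynomial ℝ, (∀ t ∈ Set.Icc (0:ℝ) 1, p.eval t ≤ gg t) ∧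
      1 - η ≤ ∫ t in (0:ℝ)..1, p.eval t := by
  set a : ℝ := Real.exp (-1) with ha
  have ha0 : 0 < a := Real.exp_pos _
  have ha1 : a < 1 := by rw [ha, Real.exp_lt_one_iff]; norm_num
  set δ : ℝ := min (Real.exp (-1 + η/2) - a) ((1-a)/2) with hδ
  have hδpos : 0 < δ := by
    apply lt_min
    · rw [ha, sub_pos, Real.exp_lt_exp]; linarith
    · linarith
  have hδ1 : a + δ ≤ Real.exp (-1 + η/2) := by
    have := min_le_left (Real.exp (-1 + η/2) - a) ((1-a)/2)
    rw [← hδ] at this; linarith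
  have hA1 : a + δ ≤ 1 := by
    have h2 := min_le_right (Real.exp (-1 + η/2) - a) ((1-a)/2)
    rw [← hδ] at h2; linarith
  set A : ℝ := a + δ with hA
  have hA0 : 0 < A := by positivity
  -- the continuous lower sandwich
  set h₁ : ℝ → ℝ := fun t => min 1 (max 0 ((t - a)/δ)) * (max t a)⁻¹ with hh₁
  have hcont : Continuous h₁ := by
    apply Continuous.mul
    · exact continuous_const.min ((continuous_const.max
        (((continuous_id.sub continuous_const)).div_const δ)))
    · exact Continuous.inv₀ (continuous_id.max continuous_const)
        (fun t => ne_of_gt (lt_max_of_lt_right ha0))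
  have h₁nonneg : ∀ t : ℝ, 0 ≤ h₁ t := by
    intro t
    apply mul_nonneg
    · exact le_min zero_le_one (le_max_left _ _)
    · exact inv_nonneg.mpr (le_trans ha0.le (le_max_right _ _))
  have h₁le : ∀ t ∈ Set.Icc (0:ℝ) 1, h₁ t ≤ gg t := by
    intro t ht
    by_cases hta : a ≤ t
    · rw [gg, if_pos hta]
      have hmax : max t a = t := max_eq_left hta
      rw [hh₁]
      simp only [hmax]
      have : min 1 (max 0 ((t - a)/δ)) ≤ 1 := min_le_left _ _
      have htinv : 0 ≤ t⁻¹ := inv_nonneg.mpr (le_trans ha0.le hta)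
      nlinarith
    · rw [gg, if_neg hta]
      push_neg at hta
      have : max 0 ((t - a)/δ) = 0 := max_eq_left (by
        apply div_nonpos_of_nonpos_of_nonneg <;> [linarith; exact hδpos.le])
      rw [hh₁]
      simp only [this, min_eq_right (le_refl (0:ℝ)) ]
      simp
  -- h₁ equals t⁻¹ on [A,1]
  have h₁eq : ∀ t ∈ Set.Icc A 1, h₁ t = t⁻¹ := by
    intro t ht
    have h1 : a ≤ t := by have := ht.1; rw [hA] at this; linarith
    have h2 : (t - a)/δ ≥ 1 := by
      rw [ge_iff_le, le_div_iff₀ hδpos]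
      have := ht.1; rw [hA] at this; linarith
    rw [hh₁]
    have hmax : max t a = t := max_eq_left h1
    have hr : max 0 ((t - a)/δ) = (t - a)/δ := max_eq_right (by linarith)
    simp only [hmax, hr, min_eq_left h2]
    rw [one_mul]
  -- integral bound
  have hint1 : (1:ℝ) - η/2 ≤ ∫ t in (0:ℝ)..1, h₁ t := by
    have hi1 : IntervalIntegrable h₁ MeasureTheory.volume 0 A :=
      hcont.intervalIntegrable 0 A
    have hi2 : IntervalIntegrable h₁ MeasureTheory.volume A 1 :=
      hcont.intervalIntegrable A 1
    have hsplit : (∫ t in (0:ℝ)..A, h₁ t) + (∫ t in A..(1:ℝ), h₁ t)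
        = ∫ t in (0:ℝ)..1, h₁ t :=
      intervalIntegral.integral_add_adjacent_intervals hi1 hi2
    have hpart1 : 0 ≤ ∫ t in (0:ℝ)..A, h₁ t :=
      intervalIntegral.integral_nonneg hA0.le (fun t _ => h₁nonneg t)
    have hpart2 : (∫ t in A..(1:ℝ), h₁ t) = Real.log (1 / A) := by
      rw [intervalIntegral.integral_congr (g := fun t => t⁻¹)
        (by intro t ht; rw [Set.uIcc_of_le hA1] at ht; exact h₁eq t ht)]
      exact integral_inv (by rw [Set.uIcc_of_le hA1]; intro hc; exact absurd hc.1 (not_le.mpr hA0))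
    have hlog : 1 - η/2 ≤ Real.log (1 / A) := by
      rw [one_div, Real.log_inv, le_neg]
      have : Real.log A ≤ -1 + η/2 := by
        rw [Real.log_le_iff_le_exp hA0]
        exact hδ1
      linarith
    linarith
  -- Weierstrass
  obtain ⟨q, hq⟩ := exists_polynomial_near_of_continuousOn 0 1 h₁
    hcont.continuousOn (η/8) (by positivity)
  refine ⟨q - Polynomial.C (η/8), ?_, ?_⟩
  · intro t ht
    have := hq t ht
    rw [abs_lt] at this
    have : Polynomial.eval t (q - Polynomial.C (η/8)) = q.eval t - η/8 := by
      simp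
    rw [this]
    have := h₁le t ht
    have h2 := (abs_lt.mp (hq t ht)).1
    linarith
  · have hev : ∀ t : ℝ, Polynomial.eval t (q - Polynomial.C (η/8)) = q.eval t - η/8 := by
      intro t; simp
    have hqi : IntervalIntegrable (fun t => q.eval t) MeasureTheory.volume 0 1 :=
      q.continuous_aeval.intervalIntegrable 0 1
    have hmono : (∫ t in (0:ℝ)..1, h₁ t) - η/8 ≤ ∫ t in (0:ℝ)..1, q.eval t := by
      have : (∫ t in (0:ℝ)..1, h₁ t - η/8) ≤ ∫ t in (0:ℝ)..1, q.eval t := by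
        apply intervalIntegral.integral_mono_on zero_le_one
          ((hcont.sub continuous_const).intervalIntegrable 0 1) hqi
        intro t ht
        have := (abs_lt.mp (hq t ht)).1
        simp only [Pi.sub_apply]
        linarith
      rwa [intervalIntegral.integral_sub (hcont.intervalIntegrable 0 1)
        (intervalIntegrable_const), intervalIntegral.integral_const,
        smul_eq_mul, sub_zero, one_mul] at this
    have : (∫ t in (0:ℝ)..1, Polynomial.eval t (q - Polynomial.C (η/8)))
        = (∫ t in (0:ℝ)..1, q.eval t) - η/8 := by
      rw [intervalIntegral.integral_congr (g := fun t => q.eval t - η/8)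
        (fun t _ => hev t)]
      rw [intervalIntegral.integral_sub hqi intervalIntegrable_const,
        intervalIntegral.integral_const, smul_eq_mul, sub_zero, one_mul]
    rw [this]
    linarith

end sandwich

lemma tb_exists_poly_high (η : ℝ) (hη : 0 < η) :
    ∃ P : Polynomial ℝ, (∀ t ∈ Set.Icc (0:ℝ) 1, gg t ≤ P.eval t) ∧
      (∫ t in (0:ℝ)..1, P.eval t) ≤ 1 + η := by
  set a : ℝ := Real.exp (-1) with ha
  have ha0 : 0 < a := Real.exp_pos _
  have ha1 : a < 1 := by rw [ha, Real.exp_lt_one_iff]; norm_num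
  set δ : ℝ := min (a/2) (η*a/2) with hδ
  have hδpos : 0 < δ := lt_min (by positivity) (by positivity)
  have hδa : δ ≤ a/2 := min_le_left _ _
  have hδη : a⁻¹ * δ ≤ η/2 := by
    have h1 : δ ≤ η*a/2 := min_le_right _ _
    rw [inv_mul_le_iff₀ ha0]
    nlinarith
  set B : ℝ := a - δ with hB
  have hB0 : 0 < B := by rw [hB]; linarith
  have hBa : B ≤ a := by rw [hB]; linarith
  set h₂ : ℝ → ℝ := fun t => min 1 (max 0 ((t - a + δ)/δ)) * (max t a)⁻¹ with hh₂
  have hcont : Continuous h₂ := by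
    apply Continuous.mul
    · exact continuous_const.min ((continuous_const.max
        (((continuous_id.sub continuous_const).add continuous_const).div_const δ)))
    · exact Continuous.inv₀ (continuous_id.max continuous_const)
        (fun t => ne_of_gt (lt_max_of_lt_right ha0))
  have h₂nonneg : ∀ t : ℝ, 0 ≤ h₂ t := by
    intro t
    apply mul_nonneg
    · exact le_min zero_le_one (le_max_left _ _)
    · exact inv_nonneg.mpr (le_trans ha0.le (le_max_right _ _))
  have h₂ge : ∀ t ∈ Set.Icc (0:ℝ) 1, gg t ≤ h₂ t := by
    intro t ht
    by_cases hta : a ≤ t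
    · rw [gg, if_pos hta]
      have hmax : max t a = t := max_eq_left hta
      have hr : min 1 (max 0 ((t - a + δ)/δ)) = 1 := by
        apply min_eq_left
        rw [le_max_iff]; right
        rw [le_div_iff₀ hδpos]; linarith
      rw [hh₂]
      simp only [hmax, hr, one_mul]
      exact le_refl _
    · rw [gg, if_neg hta]
      exact h₂nonneg t
  -- equals t⁻¹ on [a,1], equals 0 on [0,B], ≤ a⁻¹ on [B,a]
  have h₂eq : ∀ t ∈ Set.Icc a 1, h₂ t = t⁻¹ := by
    intro t ht
    have hmax : max t a = t := max_eq_left ht.1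
    have hr : min 1 (max 0 ((t - a + δ)/δ)) = 1 := by
      apply min_eq_left
      rw [le_max_iff]; right
      rw [le_div_iff₀ hδpos]
      have := ht.1; linarith
    rw [hh₂]; simp only [hmax, hr, one_mul]
  have h₂zero : ∀ t ∈ Set.Icc (0:ℝ) B, h₂ t = 0 := by
    intro t ht
    have : max 0 ((t - a + δ)/δ) = 0 := max_eq_left (by
      apply div_nonpos_of_nonpos_of_nonneg
      · have := ht.2; rw [hB] at this; linarith
      · exact hδpos.le)
    rw [hh₂]
    simp only [this, min_eq_right (le_refl (0:ℝ))]
    simp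
  have hint2 : (∫ t in (0:ℝ)..1, h₂ t) ≤ 1 + η/2 := by
    have hi1 : IntervalIntegrable h₂ MeasureTheory.volume 0 B :=
      hcont.intervalIntegrable 0 B
    have hi2 : IntervalIntegrable h₂ MeasureTheory.volume B a :=
      hcont.intervalIntegrable B a
    have hi3 : IntervalIntegrable h₂ MeasureTheory.volume a 1 :=
      hcont.intervalIntegrable a 1
    have hsplit : (∫ t in (0:ℝ)..B, h₂ t) + (∫ t in B..a, h₂ t)
        = ∫ t in (0:ℝ)..a, h₂ t :=
      intervalIntegral.integral_add_adjacent_intervals hi1 hi2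
    have hsplit2 : (∫ t in (0:ℝ)..a, h₂ t) + (∫ t in a..(1:ℝ), h₂ t)
        = ∫ t in (0:ℝ)..1, h₂ t :=
      intervalIntegral.integral_add_adjacent_intervals (hi1.trans hi2) hi3
    have hpart1 : (∫ t in (0:ℝ)..B, h₂ t) = 0 := by
      rw [intervalIntegral.integral_congr (g := fun _ => (0:ℝ))
        (by intro t ht; rw [Set.uIcc_of_le hB0.le] at ht; exact h₂zero t ht)]
      simp
    have hpart2 : (∫ t in B..a, h₂ t) ≤ a⁻¹ * δ := by
      have : (∫ t in B..a, h₂ t) ≤ ∫ _t in B..a, a⁻¹ := by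
        apply intervalIntegral.integral_mono_on hBa hi2 intervalIntegrable_const
        intro t ht
        have hmax : max t a = a := max_eq_right ht.2
        rw [hh₂]
        simp only [hmax]
        have h1 : min 1 (max 0 ((t - a + δ)/δ)) ≤ 1 := min_le_left _ _
        have h0 : 0 ≤ min 1 (max 0 ((t - a + δ)/δ)) := le_min zero_le_one (le_max_left _ _)
        have hainv : 0 ≤ a⁻¹ := inv_nonneg.mpr ha0.le
        nlinarith
      rw [intervalIntegral.integral_const, smul_eq_mul] at this
      calc (∫ t in B..a, h₂ t) ≤ (a - B) * a⁻¹ := this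
        _ = a⁻¹ * δ := by rw [hB]; ring
    have hpart3 : (∫ t in a..(1:ℝ), h₂ t) = 1 := by
      rw [intervalIntegral.integral_congr (g := fun t => t⁻¹)
        (by intro t ht; rw [Set.uIcc_of_le ha1.le] at ht; exact h₂eq t ht)]
      rw [integral_inv (by rw [Set.uIcc_of_le ha1.le]; intro hc; exact absurd hc.1 (not_le.mpr ha0))]
      rw [one_div, Real.log_inv, ha, Real.log_exp]
      norm_num
    linarith
  obtain ⟨q, hq⟩ := exists_polynomial_near_of_continuousOn 0 1 h₂
    hcont.continuousOn (η/8) (by positivity)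
  refine ⟨q + Polynomial.C (η/8), ?_, ?_⟩
  · intro t ht
    have h2 := (abs_lt.mp (hq t ht)).1
    have h3 := h₂ge t ht
    have : Polynomial.eval t (q + Polynomial.C (η/8)) = q.eval t + η/8 := by simp
    rw [this]
    linarith
  · have hev : ∀ t : ℝ, Polynomial.eval t (q + Polynomial.C (η/8)) = q.eval t + η/8 := by
      intro t; simp
    have hqi : IntervalIntegrable (fun t => q.eval t) MeasureTheory.volume 0 1 :=
      q.continuous_aeval.intervalIntegrable 0 1
    have hmono : (∫ t in (0:ℝ)..1, q.eval t) ≤ (∫ t in (0:ℝ)..1, h₂ t) + η/8 := by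
      have : (∫ t in (0:ℝ)..1, q.eval t) ≤ ∫ t in (0:ℝ)..1, h₂ t + η/8 := by
        apply intervalIntegral.integral_mono_on zero_le_one hqi
          ((hcont.add continuous_const).intervalIntegrable 0 1)
        intro t ht
        have := (abs_lt.mp (hq t ht)).2
        simp only [Pi.add_apply]
        linarith
      rwa [intervalIntegral.integral_add (hcont.intervalIntegrable 0 1)
        (intervalIntegrable_const), intervalIntegral.integral_const,
        smul_eq_mul, sub_zero, one_mul] at this
    have heq : (∫ t in (0:ℝ)..1, Polynomial.eval t (q + Polynomial.C (η/8)))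
        = (∫ t in (0:ℝ)..1, q.eval t) + η/8 := by
      rw [intervalIntegral.integral_congr (g := fun t => q.eval t + η/8)
        (fun t _ => hev t)]
      rw [intervalIntegral.integral_add hqi intervalIntegrable_const,
        intervalIntegral.integral_const, smul_eq_mul, sub_zero, one_mul]
    rw [heq]
    linarith

lemma tb_poly_summable (b : ℕ → ℝ)
    (hconv : ∀ x : ℝ, |x| < 1 → Summable fun n => b n * x ^ n)
    {x : ℝ} (hx0 : 0 < x) (hx1 : x < 1) (p : Polynomial ℝ) :
    Summable (fun n => b n * x ^ n * p.eval (x ^ n)) := by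
  have h1 : (fun n => b n * x ^ n * p.eval (x ^ n))
      = fun n => ∑ j ∈ Finset.range (p.natDegree + 1),
          p.coeff j * (b n * x ^ n * (x ^ n) ^ j) := by
    funext n
    rw [Polynomial.eval_eq_sum_range, Finset.mul_sum]
    apply Finset.sum_congr rfl
    intro j _; ring
  rw [h1]
  exact summable_sum (fun j _ => (tb_summable b hconv hx0 hx1 j).mul_left _)

lemma tb_key (b : ℕ → ℝ) (hb : ∀ n, 0 ≤ b n)
    (hconv : ∀ x : ℝ, |x| < 1 → Summable fun n => b n * x ^ n)
    (c : ℝ) (hc : 0 < c)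
    (hf : (fun x : ℝ => ∑' n, b n * x ^ n) ~[nhdsWithin 1 (Set.Iio 1)]
      (fun x : ℝ => c / (1 - x))) :
    Tendsto (fun N : ℕ => (1 - xx N) * ∑ k ∈ Finset.range (N+1), b k) atTop (nhds c) := by
  rw [tendsto_order]
  constructor
  · intro u hu
    set η : ℝ := (c - u)/(2*c) with hη
    have hηpos : 0 < η := by rw [hη]; apply div_pos <;> linarith
    obtain ⟨p, hple, hpint⟩ := tb_exists_poly_low η hηpos
    have hK := tb_poly_seq b c hc hconv hf p
    have hlt : u < c * ∫ t in (0:ℝ)..1, p.eval t := by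
      have h1 : c * (1 - η) ≤ c * ∫ t in (0:ℝ)..1, p.eval t :=
        mul_le_mul_of_nonneg_left hpint hc.le
      have h2 : c * (1 - η) = (c + u)/2 := by rw [hη]; field_simp; ring
      linarith
    have hev := hK.eventually (eventually_gt_nhds hlt)
    filter_upwards [hev, eventually_ge_atTop 1] with N h1 hN
    have hx0 := tb_xx_pos N
    have hx1 := tb_xx_lt_one hN
    have hs := tb_sandwich_low b hb hN (fun t => p.eval t) hple
      (tb_poly_summable b hconv hx0 hx1 p)
    have h2 : (1 - xx N) * (∑' n, b n * (xx N) ^ n * p.eval ((xx N) ^ n))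
        ≤ (1 - xx N) * ∑ k ∈ Finset.range (N+1), b k :=
      mul_le_mul_of_nonneg_left hs (by linarith)
    calc u < (1 - xx N) * ∑' n, b n * (xx N) ^ n * p.eval ((xx N) ^ n) := h1
      _ ≤ _ := h2
  · intro u hu
    set η : ℝ := (u - c)/(2*c) with hη
    have hηpos : 0 < η := by rw [hη]; apply div_pos <;> linarith
    obtain ⟨P, hPge, hPint⟩ := tb_exists_poly_high η hηpos
    have hK := tb_poly_seq b c hc hconv hf P
    have hlt : c * (∫ t in (0:ℝ)..1, P.eval t) < u := by
      have h1 : c * (∫ t in (0:ℝ)..1, P.eval t) ≤ c * (1 + η) :=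
        mul_le_mul_of_nonneg_left hPint hc.le
      have h2 : c * (1 + η) = (c + u)/2 := by rw [hη]; field_simp; ring
      linarith
    have hev := hK.eventually (eventually_lt_nhds hlt)
    filter_upwards [hev, eventually_ge_atTop 1] with N h1 hN
    have hx0 := tb_xx_pos N
    have hx1 := tb_xx_lt_one hN
    have hs := tb_sandwich_high b hb hN (fun t => P.eval t) hPge
      (tb_poly_summable b hconv hx0 hx1 P)
    have h2 : (1 - xx N) * (∑ k ∈ Finset.range (N+1), b k)
        ≤ (1 - xx N) * ∑' n, b n * (xx N) ^ n * P.eval ((xx N) ^ n) :=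
      mul_le_mul_of_nonneg_left hs (by linarith)
    calc (1 - xx N) * ∑ k ∈ Finset.range (N+1), b k
        ≤ (1 - xx N) * ∑' n, b n * (xx N) ^ n * P.eval ((xx N) ^ n) := h2
      _ < u := h1

lemma tb_rate : Tendsto (fun N : ℕ => (N:ℝ) * (1 - xx N)) atTop (nhds 1) := by
  have hslope : Tendsto (slope Real.exp 0) (nhdsWithin 0 {(0:ℝ)}ᶜ) (nhds 1) := by
    have := hasDerivAt_iff_tendsto_slope.mp (Real.hasDerivAt_exp 0)
    rwa [Real.exp_zero] at this
  have harg : Tendsto (fun N : ℕ => -((N:ℝ)⁻¹)) atTop (nhdsWithin 0 {(0:ℝ)}ᶜ) := by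
    apply tendsto_nhdsWithin_of_tendsto_nhds_of_eventually_within
    · have := (tendsto_natCast_atTop_atTop (R := ℝ)).inv_tendsto_atTop
      have := this.neg
      rwa [neg_zero] at this
    · filter_upwards [eventually_ge_atTop 1] with N hN
      have : (0:ℝ) < (N:ℝ) := by exact_mod_cast hN
      simp only [Set.mem_compl_iff, Set.mem_singleton_iff]
      intro hcon
      have : ((N:ℝ))⁻¹ = 0 := by linarith [neg_eq_zero.mp hcon]
      rw [inv_eq_zero] at this
      linarith
  have := hslope.comp harg
  refine this.congr' ?_
  filter_upwards [eventually_ge_atTop 1] with N hN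
  have hNne : ((N:ℝ)) ≠ 0 := by
    have : (0:ℝ) < (N:ℝ) := by exact_mod_cast hN
    linarith
  show slope Real.exp 0 (-((N:ℝ)⁻¹)) = (N:ℝ) * (1 - xx N)
  rw [slope_def_field, xx]
  rw [div_eq_iff (by simpa using hNne)]
  rw [Real.exp_zero]
  field_simp
  ring

theorem tauberian_equivalent (b : ℕ → ℝ) (hb : ∀ n, 0 ≤ b n)
    (hconv : ∀ x : ℝ, |x| < 1 → Summable fun n => b n * x ^ n)
    (c : ℝ) (hc : 0 < c)
    (hf : (fun x : ℝ => ∑' n, b n * x ^ n) ~[nhdsWithin 1 (Set.Iio 1)]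
      (fun x : ℝ => c / (1 - x))) :
    (fun n : ℕ => ∑ k ∈ Finset.range (n + 1), b k) ~[atTop]
      (fun n : ℕ => c * n) := by
  have hT := tb_key b hb hconv c hc hf
  have hR := tb_rate
  have hz : ∀ᶠ n : ℕ in atTop, c * (n:ℝ) ≠ 0 := by
    filter_upwards [eventually_ge_atTop 1] with n hn
    have : (0:ℝ) < (n:ℝ) := by exact_mod_cast hn
    positivity
  rw [Asymptotics.isEquivalent_iff_tendsto_one hz]
  have hRinv : Tendsto (fun N : ℕ => ((N:ℝ) * (1 - xx N))⁻¹) atTop (nhds 1) := by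
    have := hR.inv₀ one_ne_zero
    rwa [inv_one] at this
  have hprod := hT.mul hRinv
  rw [mul_one] at hprod
  have hdiv := hprod.div_const c
  rw [div_self hc.ne'] at hdiv
  refine hdiv.congr' ?_
  filter_upwards [eventually_ge_atTop 1] with N hN
  have hx1 := tb_xx_lt_one hN
  have hNpos : (0:ℝ) < (N:ℝ) := by exact_mod_cast hN
  have h1 : (1:ℝ) - xx N ≠ 0 := by linarith
  show (1 - xx N) * (∑ k ∈ Finset.range (N+1), b k) * ((N:ℝ) * (1 - xx N))⁻¹ / c
      = ((fun n : ℕ => ∑ k ∈ Finset.range (n + 1), b k) / fun n : ℕ => c * n) N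
  simp only [Pi.div_apply]
  field_simp
end

section
/- Let A be a nonempty finite set of relatively prime positive integers of cardinality k. Then p_A(n) = (1/∏_{a∈A} a) · n^{k−1}/(k−1)! + O(n^{k−2}) as n → ∞. -/
open Filter Asymptotics Real

/-- `pA A n` is the number of partitions of `n` all of whose parts lie in `A`. -/
noncomputable def pA (A : Set ℕ) (n : ℕ) : ℕ :=
  Nat.card {p : n.Partition // ∀ a ∈ p.parts, a ∈ A}

-- pA {1} n = 1
lemma pA_one (n : ℕ) : pA ({1} : Finset ℕ) n = 1 := by
  have : ∀ p : {p : n.Partition // ∀ a ∈ p.parts, a ∈ (↑({1}:Finset ℕ) : Set ℕ)},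
      p.1.parts = Multiset.replicate n 1 := by
    rintro ⟨p, hp⟩
    have h1 : ∀ a ∈ p.parts, a = 1 := by
      intro a ha; have := hp a ha; simpa using this
    have hcard : Multiset.card p.parts = n := by
      have := p.parts_sum
      calc Multiset.card p.parts = (p.parts.map (fun _ => 1)).sum := by simp
        _ = p.parts.sum := by
            rw [Multiset.map_congr rfl (fun x hx => (h1 x hx).symm), Multiset.map_id']
        _ = n := p.parts_sum
    exact (Multiset.eq_replicate.mpr ⟨hcard, h1⟩)
  unfold pA
  have inst : Nonempty {p : n.Partition // ∀ a ∈ p.parts, a ∈ (↑({1}:Finset ℕ) : Set ℕ)} := by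
    refine ⟨⟨⟨Multiset.replicate n 1, ?_, ?_⟩, ?_⟩⟩
    · intro i hi; simp_all [Multiset.eq_of_mem_replicate hi]
    · simp
    · intro a ha; simp [Multiset.eq_of_mem_replicate ha]
  have : Subsingleton {p : n.Partition // ∀ a ∈ p.parts, a ∈ (↑({1}:Finset ℕ) : Set ℕ)} := by
    constructor
    rintro p q
    exact Subtype.ext (Nat.Partition.ext ((this p).trans (this q).symm))
  exact Nat.card_eq_one_iff_unique.mpr ⟨this, inst⟩


lemma pA_eq_zero (B : Finset ℕ) (g n : ℕ) (hdvd : ∀ b ∈ B, g ∣ b) (hn : ¬ g ∣ n) :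
    pA (↑B) n = 0 := by
  unfold pA
  rw [Nat.card_eq_zero]
  left
  constructor
  rintro ⟨p, hp⟩
  apply hn
  rw [← p.parts_sum]
  exact Multiset.dvd_sum (fun x hx => hdvd x (hp x hx))

lemma pA_scale (B : Finset ℕ) (g : ℕ) (hg : 0 < g)
    (hdvd : ∀ b ∈ B, g ∣ b) (m : ℕ) :
    pA (↑B) (g * m) = pA (↑(B.image (· / g))) m := by
  unfold pA
  apply Nat.card_congr
  apply Equiv.symm
  refine Equiv.ofBijective (fun q => ⟨⟨q.1.parts.map (g * ·), ?_, ?_⟩, ?_⟩) ⟨?_, ?_⟩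
  · intro i hi
    obtain ⟨x, hx, rfl⟩ := Multiset.mem_map.mp hi
    exact Nat.mul_pos hg (q.1.parts_pos hx)
  · rw [Multiset.sum_map_mul_left]
    simp [q.1.parts_sum]
  · intro a ha
    obtain ⟨x, hx, rfl⟩ := Multiset.mem_map.mp ha
    have := q.2 x hx
    simp only [Finset.coe_image, Set.mem_image, Finset.mem_coe] at this
    obtain ⟨b, hb, rfl⟩ := this
    simpa [Nat.mul_div_cancel' (hdvd b hb)] using hb
  · rintro ⟨q1, hq1⟩ ⟨q2, hq2⟩ h
    simp only [Subtype.mk.injEq] at h ⊢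
    have := congrArg (fun p => Nat.Partition.parts p) h
    simp only at this
    ext1
    exact Multiset.map_injective (fun x y h => Nat.eq_of_mul_eq_mul_left hg h) this
  · rintro ⟨p, hp⟩
    have hdvd' : ∀ x ∈ p.parts, g ∣ x := fun x hx => by
      have := hp x hx
      simp only [Finset.mem_coe] at this
      exact hdvd x this
    have hmap : (p.parts.map (· / g)).map (g * ·) = p.parts := by
      rw [Multiset.map_map]
      conv_rhs => rw [← Multiset.map_id' p.parts]
      apply Multiset.map_congr rfl
      intro x hx
      exact Nat.mul_div_cancel' (hdvd' x hx)
    have hsum : g * (p.parts.map (· / g)).sum = g * m := by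
      have := congrArg Multiset.sum hmap
      rw [Multiset.sum_map_mul_left] at this
      simpa [p.parts_sum] using this
    refine ⟨⟨⟨p.parts.map (· / g), ?_, ?_⟩, ?_⟩, ?_⟩
    · intro i hi
      obtain ⟨x, hx, rfl⟩ := Multiset.mem_map.mp hi
      exact Nat.div_pos (Nat.le_of_dvd (p.parts_pos hx) (hdvd' x hx)) hg
    · exact Nat.eq_of_mul_eq_mul_left hg hsum
    · intro a ha
      obtain ⟨x, hx, rfl⟩ := Multiset.mem_map.mp ha
      have := hp x hx
      simp only [Finset.mem_coe] at this
      simp only [Finset.coe_image, Set.mem_image, Finset.mem_coe]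
      exact ⟨x, this, rfl⟩
    · exact Subtype.ext (Nat.Partition.ext hmap)


lemma nat_card_sigma {ι : Type*} [Fintype ι] (S : ι → Type*) [∀ i, Finite (S i)] :
    Nat.card (Σ i, S i) = ∑ i, Nat.card (S i) := by
  letI : ∀ i, Fintype (S i) := fun i => Fintype.ofFinite _
  simp [Nat.card_eq_fintype_card]

lemma pA_insert (a : ℕ) (ha : 0 < a) (B : Finset ℕ) (haB : a ∉ B) (n : ℕ) :
    pA (↑(insert a B)) n = ∑ j ∈ Finset.range (n / a + 1), pA (↑B) (n - a * j) := by
  unfold pA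
  rw [← Fin.sum_univ_eq_sum_range (fun j => Nat.card {p : (n - a * j).Partition // ∀ x ∈ p.parts, x ∈ (↑B : Set ℕ)})]
  rw [← nat_card_sigma]
  apply Nat.card_congr
  apply Equiv.symm
  have key : ∀ (j : Fin (n / a + 1)), a * (j : ℕ) ≤ n := by
    intro j
    calc a * (j : ℕ) ≤ a * (n / a) := by
          exact Nat.mul_le_mul_left a (Nat.lt_succ_iff.mp j.2)
      _ ≤ n := Nat.mul_div_le n a
  refine Equiv.ofBijective
    (fun x => ⟨⟨x.2.1.parts + Multiset.replicate (x.1 : ℕ) a, ?_, ?_⟩, ?_⟩) ⟨?_, ?_⟩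
  · intro i hi
    rcases Multiset.mem_add.mp hi with h | h
    · exact x.2.1.parts_pos h
    · rw [Multiset.eq_of_mem_replicate h]; exact ha
  · rw [Multiset.sum_add, Multiset.sum_replicate, x.2.1.parts_sum, smul_eq_mul]
    have := key x.1
    have hc : a * (x.1 : ℕ) = (x.1 : ℕ) * a := mul_comm _ _
    omega
  · intro y hy
    rcases Multiset.mem_add.mp hy with h | h
    · have := x.2.2 y h
      simp only [Finset.mem_coe] at this
      simp [this]
    · simp [Multiset.eq_of_mem_replicate h]
  · -- injective
    rintro ⟨j1, ⟨q1, hq1⟩⟩ ⟨j2, ⟨q2, hq2⟩⟩ h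
    simp only [Subtype.mk.injEq] at h
    have hparts := congrArg Nat.Partition.parts h
    simp only at hparts
    have hcount : ∀ (q : Multiset ℕ), (∀ x ∈ q, x ∈ (↑B : Set ℕ)) → Multiset.count a q = 0 := by
      intro q hq
      rw [Multiset.count_eq_zero]
      intro hmem
      exact haB (by simpa using hq a hmem)
    have hj : (j1 : ℕ) = (j2 : ℕ) := by
      have := congrArg (Multiset.count a) hparts
      simp only [Multiset.count_add, Multiset.count_replicate_self] at this
      rw [hcount q1.parts hq1, hcount q2.parts hq2] at this
      omega
    have hj' : j1 = j2 := Fin.ext hj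
    subst hj'
    have hq : q1 = q2 := Nat.Partition.ext (add_right_cancel hparts)
    subst hq
    rfl
  · -- surjective
    rintro ⟨p, hp⟩
    set j := Multiset.count a p.parts with hj
    have hsplit : Multiset.replicate j a + p.parts.filter (· ≠ a) = p.parts := by
      rw [← Multiset.filter_eq' p.parts a]
      exact Multiset.filter_add_not _ _
    have hsum : j * a + (p.parts.filter (· ≠ a)).sum = n := by
      have := congrArg Multiset.sum hsplit
      rw [Multiset.sum_add, Multiset.sum_replicate, smul_eq_mul, p.parts_sum] at this
      exact this
    have hjle : j ≤ n / a := Nat.le_div_iff_mul_le ha |>.mpr (by omega)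
    refine ⟨⟨⟨j, Nat.lt_succ_of_le hjle⟩, ⟨⟨p.parts.filter (· ≠ a), ?_, ?_⟩, ?_⟩⟩, ?_⟩
    · intro i hi
      exact p.parts_pos (Multiset.mem_of_mem_filter hi)
    · simp only
      have hc : a * j = j * a := mul_comm _ _
      omega
    · intro x hx
      have hx1 := Multiset.mem_of_mem_filter hx
      have hx2 := Multiset.of_mem_filter hx
      have := hp x hx1
      simp only [Finset.coe_insert, Set.mem_insert_iff, Finset.mem_coe] at this
      simp only [Finset.mem_coe]
      tauto
    · apply Subtype.ext
      apply Nat.Partition.ext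
      simp only
      rw [add_comm]
      exact hsplit

lemma pow_bound_upper (m : ℕ) : ∀ u v : ℝ, 0 ≤ v → v ≤ u →
    u ^ (m+1) - v ^ (m+1) ≤ (m+1 : ℝ) * u ^ m * (u - v) := by
  induction m with
  | zero => intro u v hv huv; norm_num
  | succ m ih =>
    intro u v hv huv
    have hu : 0 ≤ u := hv.trans huv
    have h2 := ih u v hv huv
    have h3 : v ^ (m+1) ≤ u ^ (m+1) := pow_le_pow_left₀ hv huv _
    have h5 : (0:ℝ) ≤ u - v := by linarith
    calc u ^ (m+2) - v ^ (m+2) = u * (u ^ (m+1) - v ^ (m+1)) + v ^ (m+1) * (u - v) := by ring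
      _ ≤ u * ((m+1 : ℝ) * u ^ m * (u - v)) + u ^ (m+1) * (u - v) := by
          apply add_le_add
          · exact mul_le_mul_of_nonneg_left h2 hu
          · exact mul_le_mul_of_nonneg_right h3 h5
      _ = ((m:ℝ)+1+1) * u ^ (m+1) * (u - v) := by ring
      _ = ((m+1:ℕ)+1 : ℝ) * u ^ (m+1) * (u - v) := by push_cast; ring

lemma pow_bound_lower (m : ℕ) : ∀ u v : ℝ, 0 ≤ v → v ≤ u →
    (m+1 : ℝ) * v ^ m * (u - v) ≤ u ^ (m+1) - v ^ (m+1) := by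
  induction m with
  | zero => intro u v hv huv; norm_num
  | succ m ih =>
    intro u v hv huv
    have hu : 0 ≤ u := hv.trans huv
    have h2 := ih u v hv huv
    have h4 : (0:ℝ) ≤ v ^ m := pow_nonneg hv m
    have h5 : (0:ℝ) ≤ u - v := by linarith
    have h6 : v * ((m+1 : ℝ) * v ^ m * (u - v)) ≤ u * (u ^ (m+1) - v ^ (m+1)) := by
      have h7 : v * ((m+1 : ℝ) * v ^ m * (u - v)) ≤ u * ((m+1 : ℝ) * v ^ m * (u - v)) := by
        apply mul_le_mul_of_nonneg_right huv
        positivity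
      exact h7.trans (mul_le_mul_of_nonneg_left h2 hu)
    calc ((m+1:ℕ)+1 : ℝ) * v ^ (m+1) * (u - v)
        = v * ((m+1 : ℝ) * v ^ m * (u - v)) + v ^ (m+1) * (u - v) := by push_cast; ring
      _ ≤ u * (u ^ (m+1) - v ^ (m+1)) + v ^ (m+1) * (u - v) := by linarith
      _ = u ^ (m+2) - v ^ (m+2) := by ring

lemma sum_pow_est (a d M : ℕ) (ha : 0 < a) :
    |(∑ t ∈ Finset.range (M/a + 1), ((M - a*t : ℕ):ℝ)^d) - (M:ℝ)^(d+1)/((a:ℝ)*((d:ℝ)+1))| ≤ (M:ℝ)^d := by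
  have haR : (0:ℝ) < a := by exact_mod_cast ha
  have hdivle : ((M/a : ℕ):ℝ) ≤ (M:ℝ)/(a:ℝ) := by
    rw [le_div_iff₀ haR]
    exact_mod_cast Nat.div_mul_le_self M a
  have hdivgt : (M:ℝ)/(a:ℝ) - 1 < ((M/a : ℕ):ℝ) := by
    rw [sub_lt_iff_lt_add, div_lt_iff₀ haR]
    have h2 : M < (M/a + 1) * a := by
      have hmod := Nat.mod_lt M ha
      have hdm := Nat.div_add_mod M a
      have he : (M/a + 1) * a = a * (M/a) + a := by ring
      omega
    calc (M:ℝ) < ((M/a + 1) * a : ℕ) := by exact_mod_cast h2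
      _ = (((M/a:ℕ):ℝ) + 1) * a := by push_cast; ring
  rcases d with _ | d
  · -- d = 0
    simp only [pow_zero, Finset.sum_const, Finset.card_range, nsmul_eq_mul, mul_one, pow_one]
    rw [abs_le]
    have : ((M/a + 1 : ℕ):ℝ) = ((M/a:ℕ):ℝ) + 1 := by push_cast; ring
    rw [this]
    norm_num
    constructor <;> [linarith; linarith]
  · set D := d + 1 with hD
    set T := M / a + 1 with hT
    set x : ℕ → ℝ := fun t => ((M - a*t : ℕ):ℝ) with hx
    set S := ∑ t ∈ Finset.range T, x t ^ D with hS
    have hxT : x T = 0 := by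
      simp only [hx]
      have h1 : M < a * T := by
        have hmod := Nat.mod_lt M ha
        have hdm := Nat.div_add_mod M a
        have he : a * T = a * (M/a) + a := by rw [hT]; ring
        omega
      have : M - a * T = 0 := by omega
      simp [this]
    have hx0 : x 0 = M := by simp [hx]
    have hmono : ∀ t, x (t+1) ≤ x t := by
      intro t; simp only [hx]
      have he : a*(t+1) = a*t + a := by ring
      have : M - a*(t+1) ≤ M - a*t := by omega
      exact_mod_cast this
    have hgap : ∀ t, x t - x (t+1) ≤ a := by
      intro t; simp only [hx]
      have he : a*(t+1) = a*t + a := by ring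
      have h1 : (M - a*t : ℕ) ≤ (M - a*(t+1) : ℕ) + a := by omega
      have h2 := (Nat.cast_le (α := ℝ)).mpr h1
      push_cast at h2
      linarith
    have hgapeq : ∀ t, t + 1 < T → x t - x (t+1) = a := by
      intro t ht; simp only [hx]
      have he : a*(t+1) = a*t + a := by ring
      have h1 : a * (t+1) ≤ M := by
        have h0 : t + 1 ≤ M / a := by omega
        calc a * (t+1) ≤ a * (M/a) := Nat.mul_le_mul_left a h0
          _ ≤ M := Nat.mul_div_le M a
      have h2 : (M - a*t : ℕ) = (M - a*(t+1) : ℕ) + a := by omega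
      rw [h2]
      push_cast
      ring
    have hxnn : ∀ t, 0 ≤ x t := fun t => Nat.cast_nonneg _
    have htel : ∑ t ∈ Finset.range T, (x t ^ (D+1) - x (t+1) ^ (D+1)) = (M:ℝ)^(D+1) := by
      rw [Finset.sum_range_sub' (fun t => x t ^ (D+1))]
      rw [hx0, hxT]
      simp
    have hDR : (0:ℝ) < (D:ℝ) := by positivity
    have hK : (0:ℝ) < ((D:ℝ)+1) * a := by positivity
    have hup : (M:ℝ)^(D+1) ≤ ((D:ℝ)+1) * a * S := by
      rw [← htel, hS, Finset.mul_sum]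
      apply Finset.sum_le_sum
      intro t _
      have h1 := pow_bound_upper D (x t) (x (t+1)) (hxnn (t+1)) (hmono t)
      have h3 : (0:ℝ) ≤ x t ^ D := pow_nonneg (hxnn t) D
      have h6 : (x t - x (t+1)) * x t ^ D ≤ (a:ℝ) * x t ^ D :=
        mul_le_mul_of_nonneg_right (hgap t) h3
      push_cast at h1
      calc x t ^ (D+1) - x (t+1) ^ (D+1) ≤ ((D:ℝ)+1) * x t ^ D * (x t - x (t+1)) := h1
        _ = ((D:ℝ)+1) * ((x t - x (t+1)) * x t ^ D) := by ring
        _ ≤ ((D:ℝ)+1) * ((a:ℝ) * x t ^ D) := by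
            exact mul_le_mul_of_nonneg_left h6 (by positivity)
        _ = ((D:ℝ)+1) * a * x t ^ D := by ring
    have hS' : ∑ t ∈ Finset.range T, x (t+1) ^ D = S - (M:ℝ)^D := by
      have h1 := Finset.sum_range_succ' (fun t => x t ^ D) T
      have h2 := Finset.sum_range_succ (fun t => x t ^ D) T
      rw [h2] at h1
      have h3 : x T ^ D = 0 := by rw [hxT]; exact zero_pow (by omega)
      rw [h3, hx0] at h1
      -- h1 : S + 0 = (∑ t ∈ range T, x (t+1) ^ D) + M ^ D
      rw [hS]
      linarith [h1]
    have hlow : ((D:ℝ)+1) * a * (S - (M:ℝ)^D) ≤ (M:ℝ)^(D+1) := by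
      rw [← hS', Finset.mul_sum, ← htel]
      apply Finset.sum_le_sum
      intro t ht
      rcases Nat.lt_or_ge (t+1) T with h | h
      · have h1 := pow_bound_lower D (x t) (x (t+1)) (hxnn (t+1)) (hmono t)
        rw [hgapeq t h] at h1
        push_cast at h1
        calc ((D:ℝ)+1) * a * x (t+1) ^ D = ((D:ℝ)+1) * x (t+1) ^ D * a := by ring
          _ ≤ x t ^ (D+1) - x (t+1) ^ (D+1) := h1
      · have hteq : t + 1 = T := by
          simp only [Finset.mem_range] at ht; omega
        rw [hteq, hxT]
        have h5 : (0:ℝ)^(D+1) = 0 := by simp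
        have h6 : (0:ℝ)^D = 0 := zero_pow (by omega)
        rw [h5, h6]
        have h7 : (0:ℝ) ≤ x t ^ (D+1) := pow_nonneg (hxnn t) _
        simpa using h7
    rw [abs_le]
    constructor
    · have h1 : (M:ℝ)^(D+1)/(((D:ℝ)+1) * a) ≤ S := (div_le_iff₀ hK).mpr (by linarith [hup])
      have h2 : (M:ℝ)^(D+1)/((a:ℝ)*((D:ℝ)+1)) = (M:ℝ)^(D+1)/(((D:ℝ)+1) * a) := by ring_nf
      have h3 : (0:ℝ) ≤ (M:ℝ)^D := pow_nonneg (Nat.cast_nonneg _) _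
      rw [h2]
      linarith
    · have h1 : S - (M:ℝ)^D ≤ (M:ℝ)^(D+1)/(((D:ℝ)+1) * a) := (le_div_iff₀ hK).mpr (by linarith [hlow])
      have h2 : (M:ℝ)^(D+1)/((a:ℝ)*((D:ℝ)+1)) = (M:ℝ)^(D+1)/(((D:ℝ)+1) * a) := by ring_nf
      rw [h2]
      linarith

lemma reindex_sum (a g r n M : ℕ) (f : ℕ → ℕ) (ha : 0 < a) (hg : 0 < g)
    (hr : r < g) (harn : a * r ≤ n) (hM : g * M = n - a * r)
    (hcop : Nat.gcd a g = 1) :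
    ∑ j ∈ Finset.range (n/a + 1), (if g ∣ (n - a*j) then f ((n - a*j)/g) else 0)
      = ∑ t ∈ Finset.range (M/a + 1), f (M - a*t) := by
  have hrmod : a * r ≡ n [MOD g] := (Nat.modEq_iff_dvd' harn).mpr ⟨M, hM.symm⟩
  have himval : ∀ t, t ≤ M/a → n - a*(r + g*t) = g * (M - a*t) ∧ a * (r + g*t) ≤ n := by
    intro t ht
    have hat : a * t ≤ M := by
      calc a * t ≤ a * (M/a) := Nat.mul_le_mul_left a ht
        _ ≤ M := Nat.mul_div_le M a
    have e1 : a * (r + g*t) = a*r + g*(a*t) := by ring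
    have e2 : g*(a*t) ≤ g*M := Nat.mul_le_mul_left g hat
    have e3 : g*(M - a*t) = g*M - g*(a*t) := Nat.mul_sub g M (a*t)
    constructor
    · omega
    · omega
  set G : ℕ → ℕ := fun j => if g ∣ (n - a*j) then f ((n - a*j)/g) else 0 with hG
  have h1 : ∑ j ∈ (Finset.range (M/a+1)).image (fun t => r + g*t), G j
      = ∑ t ∈ Finset.range (M/a+1), G (r + g*t) :=
    Finset.sum_image (fun x _ y _ h => Nat.eq_of_mul_eq_mul_left hg (by omega : g*x = g*y))
  have h2 : ∀ t ∈ Finset.range (M/a+1), G (r + g*t) = f (M - a*t) := by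
    intro t ht
    simp only [Finset.mem_range] at ht
    obtain ⟨hv, _⟩ := himval t (by omega)
    simp only [hG, hv]
    rw [if_pos ⟨M - a*t, rfl⟩, Nat.mul_div_cancel_left _ hg]
  have h3 : ∑ j ∈ Finset.range (n/a + 1), G j
      = ∑ j ∈ (Finset.range (M/a+1)).image (fun t => r + g*t), G j := by
    apply (Finset.sum_subset ?_ ?_).symm
    · intro j hj
      simp only [Finset.mem_image, Finset.mem_range] at hj ⊢
      obtain ⟨t, ht, rfl⟩ := hj
      have hle := (himval t (by omega)).2
      have : r + g*t ≤ n/a := Nat.le_div_iff_mul_le ha |>.mpr (by rw [mul_comm]; exact hle)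
      omega
    · intro j hj hjim
      simp only [Finset.mem_range] at hj
      simp only [Finset.mem_image, Finset.mem_range] at hjim
      simp only [hG]
      rw [if_neg]
      intro hdvd
      apply hjim
      have hajn : a * j ≤ n := by
        have hj' : j ≤ n / a := by omega
        calc a * j ≤ a * (n/a) := Nat.mul_le_mul_left a hj'
          _ ≤ n := Nat.mul_div_le n a
      have hjmod : a * j ≡ n [MOD g] := (Nat.modEq_iff_dvd' hajn).mpr hdvd
      have hjr : j ≡ r [MOD g] :=
        Nat.ModEq.cancel_left_of_coprime (by rwa [Nat.gcd_comm]) (hjmod.trans hrmod.symm)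
      have hrj : r ≤ j := by
        have hh1 : j % g = r % g := hjr
        have hh2 : r % g = r := Nat.mod_eq_of_lt hr
        have hh3 := Nat.mod_le j g
        omega
      obtain ⟨t, ht⟩ := (Nat.modEq_iff_dvd' hrj).mp hjr.symm
      refine ⟨t, ?_, by omega⟩
      have e1 : a * j = a*r + g*(a*t) := by
        have hje : j = r + g * t := by omega
        rw [hje]; ring
      have e2 : g*(a*t) ≤ g*M := by omega
      have hat : a*t ≤ M := Nat.le_of_mul_le_mul_left e2 hg
      have : t ≤ M/a := Nat.le_div_iff_mul_le ha |>.mpr (by rw [mul_comm]; exact hat)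
      omega
  rw [h3, h1]
  exact Finset.sum_congr rfl h2

lemma exists_residue (a g n : ℕ) (hg : 0 < g) (hcop : Nat.gcd a g = 1) :
    ∃ r, r < g ∧ a * r ≡ n [MOD g] := by
  haveI : NeZero g := ⟨hg.ne'⟩
  set u := ZMod.unitOfCoprime a hcop with hu
  refine ⟨((↑(u⁻¹) : ZMod g) * n).val, ZMod.val_lt _, ?_⟩
  rw [← ZMod.natCast_eq_natCast_iff]
  push_cast
  rw [ZMod.natCast_val, ZMod.cast_id]
  rw [show ((a : ZMod g)) = (u : ZMod g) from (ZMod.coe_unitOfCoprime a hcop).symm]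
  rw [← mul_assoc, ← Units.val_mul, mul_inv_cancel, Units.val_one, one_mul]

lemma pA_main (k : ℕ) : ∀ s : Finset ℕ, s.card = k → (∀ b ∈ s, 0 < b) → s.gcd id = 1 →
    ∃ C : ℝ, 0 ≤ C ∧ ∀ n : ℕ,
      |(pA ↑s n : ℝ) - (n:ℝ)^(k-1) / ((Nat.factorial (k-1) : ℝ) * ∏ b ∈ s, (b:ℝ))|
        ≤ C * (if k = 1 then 0 else ((n:ℝ)+1)^(k-2)) := by
  induction k using Nat.strong_induction_on with
  | _ k IH =>
  intro s hcard hpos hgcd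
  rcases Nat.lt_or_ge k 2 with hk2 | hk2
  · -- k = 0 or 1
    interval_cases k
    · exfalso
      rw [Finset.card_eq_zero] at hcard
      subst hcard
      simp [Finset.gcd_empty] at hgcd
    · obtain ⟨b, rfl⟩ := Finset.card_eq_one.mp hcard
      have hb : b = 1 := by
        have := hgcd
        simpa [Finset.gcd_singleton] using this
      subst hb
      refine ⟨0, le_refl _, fun n => ?_⟩
      rw [pA_one]
      norm_num
  · -- k ≥ 2
    have hcardpos : 0 < s.card := by omega
    obtain ⟨a, ha⟩ := Finset.card_pos.mp hcardpos
    have hapos : 0 < a := hpos a ha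
    set B := s.erase a with hB
    have hsB : insert a B = s := Finset.insert_erase ha
    have haB : a ∉ B := Finset.notMem_erase a s
    have hBcard : B.card = k - 1 := by
      rw [hB, Finset.card_erase_of_mem ha, hcard]
    have hBpos : ∀ b ∈ B, 0 < b := fun b hb => hpos b (Finset.mem_of_mem_erase hb)
    have hBne : B.Nonempty := Finset.card_pos.mp (by omega)
    set g := B.gcd id with hg
    have hgpos : 0 < g := by
      rcases Nat.eq_zero_or_pos g with h0 | h
      · exfalso
        obtain ⟨b, hb⟩ := hBne
        have := Finset.gcd_eq_zero_iff.mp (hg ▸ h0) b hb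
        simp only [id] at this
        exact absurd this (hBpos b hb).ne'
      · exact h
    have hdvdB : ∀ b ∈ B, g ∣ b := fun b hb => Finset.gcd_dvd hb
    have hcop : Nat.gcd a g = 1 := by
      have h1 : (insert a B).gcd id = 1 := by rw [hsB]; exact hgcd
      rw [Finset.gcd_insert] at h1
      exact h1
    set B' := B.image (fun b => b / g) with hB'
    have hinj : ∀ x ∈ B, ∀ y ∈ B, x / g = y / g → x = y := by
      intro x hx y hy h
      have hx' := Nat.div_mul_cancel (hdvdB x hx)
      have hy' := Nat.div_mul_cancel (hdvdB y hy)
      rw [← hx', ← hy', h]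
    have hB'card : B'.card = k - 1 := by
      rw [hB', Finset.card_image_of_injOn hinj, hBcard]
    have hB'pos : ∀ b ∈ B', 0 < b := by
      intro b hb
      obtain ⟨x, hx, rfl⟩ := Finset.mem_image.mp hb
      exact Nat.div_pos (Nat.le_of_dvd (hBpos x hx) (hdvdB x hx)) hgpos
    have hB'gcd : B'.gcd id = 1 := by
      rw [hB', Finset.gcd_image]
      obtain ⟨b, hb⟩ := hBne
      exact Finset.gcd_div_id_eq_one hb (hBpos b hb).ne'
    obtain ⟨C1, hC1nn, hIH⟩ := IH (k-1) (by omega) B' hB'card hB'pos hB'gcd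
    have hBrw : ∀ m, pA ↑B m = if g ∣ m then pA ↑B' (m/g) else 0 := by
      intro m
      by_cases hd : g ∣ m
      · obtain ⟨m', rfl⟩ := hd
        rw [if_pos ⟨m', rfl⟩, Nat.mul_div_cancel_left _ hgpos]
        exact pA_scale B g hgpos hdvdB m'
      · rw [if_neg hd]
        exact pA_eq_zero B g m hdvdB hd
    -- notation
    set d := k - 2 with hd
    set P' : ℝ := ∏ b ∈ B', (b:ℝ) with hP'
    have hP'pos : 0 < P' := Finset.prod_pos (fun b hb => by exact_mod_cast hB'pos b hb)
    have hdfacpos : (0:ℝ) < (Nat.factorial d : ℝ) := by positivity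
    have hprodBnat : ∏ b ∈ B, b = g^(k-1) * ∏ b ∈ B', b := by
      have h1 : ∏ b ∈ B, b = ∏ b ∈ B, (g * (b / g)) := by
        apply Finset.prod_congr rfl
        intro b hb
        exact (Nat.mul_div_cancel' (hdvdB b hb)).symm
      rw [h1, Finset.prod_mul_distrib, Finset.prod_const, hBcard]
      congr 1
      rw [hB', Finset.prod_image hinj]
    have hprodB : ∏ b ∈ B, (b:ℝ) = (g:ℝ)^(k-1) * P' := by
      rw [hP']
      have := congrArg (fun x : ℕ => (x : ℝ)) hprodBnat
      push_cast at this
      simpa using this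
    have hprods : ∏ b ∈ s, (b:ℝ) = (a:ℝ) * ((g:ℝ)^(k-1) * P') := by
      rw [← hprodB, ← hsB, Finset.prod_insert haB]
    have hKfac : ((Nat.factorial (k-1) : ℕ):ℝ) = ((d:ℝ)+1) * (Nat.factorial d : ℝ) := by
      have e : k - 1 = d + 1 := by omega
      rw [e, Nat.factorial_succ]
      push_cast
      ring
    set DF : ℝ := (Nat.factorial d : ℝ) * P' with hDF
    have hDFpos : 0 < DF := mul_pos hdfacpos hP'pos
    set C2 : ℝ := C1 + 2/DF with hC2
    have hC2nn : 0 ≤ C2 := add_nonneg hC1nn (by positivity)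
    set Q : ℝ := (a:ℝ)*((d:ℝ)+1)*DF with hQ
    have hQpos : 0 < Q := by
      have : (0:ℝ) < a := by exact_mod_cast hapos
      positivity
    have key : ∀ n : ℕ, a*g ≤ n →
        |(pA ↑s n : ℝ) - (n:ℝ)^(k-1) / ((Nat.factorial (k-1) : ℝ) * ∏ b ∈ s, (b:ℝ))|
          ≤ C2 * ((n:ℝ)+1)^(k-2) := by
      intro n hn
      obtain ⟨r, hr, hrmod⟩ := exists_residue a g n hgpos hcop
      have harn : a * r ≤ n := by
        have h1 : a * r ≤ a * g := Nat.mul_le_mul_left a hr.le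
        omega
      have hdvd_nar : g ∣ n - a*r := (Nat.modEq_iff_dvd' harn).mp hrmod
      set M := (n - a*r)/g with hMdef
      have hM : g * M = n - a*r := Nat.mul_div_cancel' hdvd_nar
      have hident : pA ↑s n = ∑ t ∈ Finset.range (M/a+1), pA ↑B' (M - a*t) := by
        have h1 : pA ↑s n = ∑ j ∈ Finset.range (n/a+1), pA ↑B (n - a*j) := by
          rw [← hsB]
          exact pA_insert a hapos B haB n
        rw [h1, Finset.sum_congr rfl (fun j _ => hBrw (n - a*j))]
        exact reindex_sum a g r n M (pA ↑B') hapos hgpos hr harn hM hcop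
      have hMn : M ≤ n := le_trans (Nat.div_le_self _ _) (Nat.sub_le _ _)
      set T := M/a + 1 with hT
      have hcastid : (pA ↑s n : ℝ) = ∑ t ∈ Finset.range T, (pA ↑B' (M - a*t) : ℝ) := by
        rw [hident]
        push_cast
        rfl
      have hIH' : ∀ t ∈ Finset.range T, |(pA ↑B' (M - a*t) : ℝ) - ((M - a*t : ℕ):ℝ)^d / DF|
          ≤ C1 * (if k - 1 = 1 then 0 else (((M - a*t:ℕ):ℝ)+1)^(k-3)) := by
        intro t _
        have h0 := hIH (M - a*t)
        have e1 : k - 1 - 1 = d := by omega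
        have e2 : k - 1 - 2 = k - 3 := by omega
        rw [e1, e2] at h0
        rw [hDF]
        exact h0
      have stepA : |(∑ t ∈ Finset.range T, (pA ↑B' (M - a*t) : ℝ)) -
          ∑ t ∈ Finset.range T, ((M - a*t : ℕ):ℝ)^d / DF| ≤ C1 * ((n:ℝ)+1)^(k-2) := by
        rw [← Finset.sum_sub_distrib]
        refine (Finset.abs_sum_le_sum_abs _ _).trans ?_
        refine le_trans (Finset.sum_le_sum hIH') ?_
        rw [← Finset.mul_sum]
        apply mul_le_mul_of_nonneg_left ?_ hC1nn
        by_cases hk1 : k - 1 = 1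
        · simp only [if_pos hk1, Finset.sum_const, smul_zero]
          positivity
        · simp only [if_neg hk1]
          have hterm : ∀ t ∈ Finset.range T, (((M - a*t:ℕ):ℝ)+1)^(k-3) ≤ ((n:ℝ)+1)^(k-3) := by
            intro t _
            apply pow_le_pow_left₀ (by positivity)
            have hle : (M - a*t : ℕ) ≤ n := le_trans (Nat.sub_le _ _) hMn
            have := (Nat.cast_le (α := ℝ)).mpr hle
            linarith
          refine le_trans (Finset.sum_le_sum hterm) ?_
          rw [Finset.sum_const, Finset.card_range, nsmul_eq_mul]
          have hTle : (T:ℝ) ≤ (n:ℝ)+1 := by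
            have h3 : T ≤ n + 1 := by
              have := Nat.div_le_self M a
              omega
            exact_mod_cast h3
          have hk3 : k - 2 = (k-3) + 1 := by omega
          rw [hk3, pow_succ]
          calc (T:ℝ) * ((n:ℝ)+1)^(k-3) ≤ ((n:ℝ)+1) * ((n:ℝ)+1)^(k-3) :=
                mul_le_mul_of_nonneg_right hTle (by positivity)
            _ = ((n:ℝ)+1)^(k-3) * ((n:ℝ)+1) := by ring
      have stepB : |(∑ t ∈ Finset.range T, ((M - a*t : ℕ):ℝ)^d / DF) -
          (M:ℝ)^(d+1)/((a:ℝ)*((d:ℝ)+1)) / DF| ≤ (M:ℝ)^d / DF := by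
        rw [← Finset.sum_div, div_sub_div_same, abs_div, abs_of_pos hDFpos]
        gcongr
        exact sum_pow_est a d M hapos
      -- real facts about M and n/g
      have hgR : (1:ℝ) ≤ (g:ℝ) := by exact_mod_cast hgpos
      have haR : (0:ℝ) < (a:ℝ) := by exact_mod_cast hapos
      have hMcast : (g:ℝ) * (M:ℝ) = (n:ℝ) - (a:ℝ)*(r:ℝ) := by
        have := congrArg (fun x : ℕ => (x:ℝ)) hM
        push_cast [Nat.cast_sub harn] at this
        linarith [this]
      have hgR0 : (0:ℝ) < (g:ℝ) := by linarith
      have har0 : (0:ℝ) ≤ (a:ℝ)*(r:ℝ) := by positivity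
      have hvleu : (M:ℝ) ≤ (n:ℝ)/(g:ℝ) := by
        rw [le_div_iff₀ hgR0, mul_comm]
        linarith
      have huv : (n:ℝ)/(g:ℝ) - (M:ℝ) ≤ (a:ℝ) := by
        rw [sub_le_iff_le_add, div_le_iff₀ hgR0]
        have hrg : (r:ℝ) ≤ (g:ℝ) := by exact_mod_cast hr.le
        have harg : (a:ℝ)*(r:ℝ) ≤ (a:ℝ)*(g:ℝ) := mul_le_mul_of_nonneg_left hrg haR.le
        have hexp : ((a:ℝ)+(M:ℝ))*(g:ℝ) = (g:ℝ)*(M:ℝ) + (a:ℝ)*(g:ℝ) := by ring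
        linarith
      have hule : (n:ℝ)/(g:ℝ) ≤ (n:ℝ) :=
        div_le_self (Nat.cast_nonneg n) hgR
      have hMnn : (0:ℝ) ≤ (M:ℝ) := Nat.cast_nonneg M
      have hpowdiff : |(M:ℝ)^(d+1) - ((n:ℝ)/(g:ℝ))^(d+1)| ≤ ((d:ℝ)+1) * (n:ℝ)^d * a := by
        have h1 := pow_bound_upper d ((n:ℝ)/(g:ℝ)) (M:ℝ) hMnn hvleu
        have h2 : (M:ℝ)^(d+1) ≤ ((n:ℝ)/(g:ℝ))^(d+1) := pow_le_pow_left₀ hMnn hvleu _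
        rw [abs_sub_comm, abs_of_nonneg (by linarith)]
        have h3 : ((n:ℝ)/(g:ℝ))^d ≤ (n:ℝ)^d :=
          pow_le_pow_left₀ (by positivity) hule _
        have h5 : (0:ℝ) ≤ (n:ℝ)/(g:ℝ) - (M:ℝ) := by linarith
        have h6 : ((n:ℝ)/(g:ℝ))^d * ((n:ℝ)/(g:ℝ) - (M:ℝ)) ≤ (n:ℝ)^d * ((n:ℝ)/(g:ℝ) - (M:ℝ)) :=
          mul_le_mul_of_nonneg_right h3 h5
        have h7 : (n:ℝ)^d * ((n:ℝ)/(g:ℝ) - (M:ℝ)) ≤ (n:ℝ)^d * (a:ℝ) :=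
          mul_le_mul_of_nonneg_left huv (by positivity)
        calc ((n:ℝ)/(g:ℝ))^(d+1) - (M:ℝ)^(d+1)
            ≤ ((d:ℝ)+1) * ((n:ℝ)/(g:ℝ))^d * ((n:ℝ)/(g:ℝ) - (M:ℝ)) := h1
          _ = ((d:ℝ)+1) * (((n:ℝ)/(g:ℝ))^d * ((n:ℝ)/(g:ℝ) - (M:ℝ))) := by ring
          _ ≤ ((d:ℝ)+1) * ((n:ℝ)^d * ((n:ℝ)/(g:ℝ) - (M:ℝ))) :=
              mul_le_mul_of_nonneg_left h6 (by positivity)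
          _ ≤ ((d:ℝ)+1) * ((n:ℝ)^d * (a:ℝ)) := mul_le_mul_of_nonneg_left h7 (by positivity)
          _ = ((d:ℝ)+1) * (n:ℝ)^d * a := by ring
      have hmain_eq : (n:ℝ)^(k-1)/((Nat.factorial (k-1) : ℝ) * ∏ b ∈ s, (b:ℝ))
          = ((n:ℝ)/(g:ℝ))^(d+1)/Q := by
        rw [hprods, hKfac, show k-1 = d+1 from by omega, div_pow, hQ, hDF, div_div]
        congr 1
        ring
      have stepC : |(M:ℝ)^(d+1)/((a:ℝ)*((d:ℝ)+1)) / DF -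
          (n:ℝ)^(k-1)/((Nat.factorial (k-1) : ℝ) * ∏ b ∈ s, (b:ℝ))| ≤ (n:ℝ)^d / DF := by
        rw [hmain_eq, div_div, ← hQ, div_sub_div_same, abs_div, abs_of_pos hQpos]
        rw [div_le_iff₀ hQpos]
        calc |(M:ℝ)^(d+1) - ((n:ℝ)/(g:ℝ))^(d+1)| ≤ ((d:ℝ)+1) * (n:ℝ)^d * a := hpowdiff
          _ = (n:ℝ)^d / DF * Q := by
              rw [hQ]
              rw [div_mul_eq_mul_div, mul_comm]
              rw [eq_div_iff hDFpos.ne']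
              ring
      -- assemble
      have htri : |(pA ↑s n : ℝ) - (n:ℝ)^(k-1) / ((Nat.factorial (k-1) : ℝ) * ∏ b ∈ s, (b:ℝ))|
          ≤ C1 * ((n:ℝ)+1)^(k-2) + (M:ℝ)^d / DF + (n:ℝ)^d / DF := by
        rw [hcastid]
        set X := ∑ t ∈ Finset.range T, (pA ↑B' (M - a*t) : ℝ)
        set Y := ∑ t ∈ Finset.range T, ((M - a*t : ℕ):ℝ)^d / DF
        set Z := (M:ℝ)^(d+1)/((a:ℝ)*((d:ℝ)+1)) / DF
        set W := (n:ℝ)^(k-1) / ((Nat.factorial (k-1) : ℝ) * ∏ b ∈ s, (b:ℝ))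
        calc |X - W| ≤ |X - Y| + |Y - W| := abs_sub_le X Y W
          _ ≤ |X - Y| + (|Y - Z| + |Z - W|) := by linarith [abs_sub_le Y Z W]
          _ ≤ C1 * ((n:ℝ)+1)^(k-2) + ((M:ℝ)^d / DF + (n:ℝ)^d / DF) := by
              refine add_le_add stepA (add_le_add stepB stepC)
          _ = C1 * ((n:ℝ)+1)^(k-2) + (M:ℝ)^d / DF + (n:ℝ)^d / DF := by ring
      refine htri.trans ?_
      have hMd : (M:ℝ)^d ≤ ((n:ℝ)+1)^d := by
        apply pow_le_pow_left₀ hMnn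
        have := (Nat.cast_le (α := ℝ)).mpr hMn
        linarith
      have hnd : (n:ℝ)^d ≤ ((n:ℝ)+1)^d := by
        apply pow_le_pow_left₀ (Nat.cast_nonneg n)
        linarith
      have hdk2 : d = k - 2 := hd
      have hbnn : (0:ℝ) ≤ ((n:ℝ)+1)^(k-2) := by positivity
      have hfin : (M:ℝ)^d / DF + (n:ℝ)^d / DF ≤ 2/DF * ((n:ℝ)+1)^(k-2) := by
        rw [← hdk2] at hbnn ⊢
        have h1 : (M:ℝ)^d / DF ≤ ((n:ℝ)+1)^d / DF := by gcongr
        have h2 : (n:ℝ)^d / DF ≤ ((n:ℝ)+1)^d / DF := by gcongr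
        have : 2/DF * ((n:ℝ)+1)^d = ((n:ℝ)+1)^d / DF + ((n:ℝ)+1)^d / DF := by ring
        linarith
      rw [hC2, add_mul]
      linarith
    -- small n and conclusion
    set mainterm : ℕ → ℝ := fun m =>
      (m:ℝ)^(k-1) / ((Nat.factorial (k-1) : ℝ) * ∏ b ∈ s, (b:ℝ)) with hmainterm
    set C0 : ℝ := ∑ m ∈ Finset.range (a*g), |(pA ↑s m : ℝ) - mainterm m| with hC0
    have hC0nn : 0 ≤ C0 := Finset.sum_nonneg (fun _ _ => abs_nonneg _)
    refine ⟨C2 + C0, by linarith, fun n => ?_⟩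
    rw [if_neg (by omega : ¬ k = 1)]
    have hb1 : (1:ℝ) ≤ ((n:ℝ)+1)^(k-2) :=
      one_le_pow₀ (by linarith [Nat.cast_nonneg (α := ℝ) n])
    have hbnn : (0:ℝ) ≤ ((n:ℝ)+1)^(k-2) := by positivity
    rcases le_or_gt (a*g) n with hcase | hcase
    · have h1 := key n hcase
      have h2 : C2 * ((n:ℝ)+1)^(k-2) ≤ (C2 + C0) * ((n:ℝ)+1)^(k-2) := by
        apply mul_le_mul_of_nonneg_right (by linarith) hbnn
      exact le_trans h1 h2
    · have hmem : n ∈ Finset.range (a*g) := Finset.mem_range.mpr hcase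
      have h1 : |(pA ↑s n : ℝ) - mainterm n| ≤ C0 := by
        rw [hC0]
        exact Finset.single_le_sum
          (f := fun m => |(pA ↑s m : ℝ) - mainterm m|) (fun m _ => abs_nonneg _) hmem
      calc |(pA ↑s n : ℝ) - mainterm n| ≤ C0 := h1
        _ = C0 * 1 := (mul_one C0).symm
        _ ≤ C0 * ((n:ℝ)+1)^(k-2) := mul_le_mul_of_nonneg_left hb1 hC0nn
        _ ≤ (C2 + C0) * ((n:ℝ)+1)^(k-2) := by
            apply mul_le_mul_of_nonneg_right (by linarith) hbnn

theorem partition_finite_set_asymptotics (s : Finset ℕ) (hs : s.Nonempty)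
    (hpos : ∀ a ∈ s, 0 < a) (hgcd : s.gcd id = 1) (k : ℕ) (hk : k = s.card) :
    (fun n : ℕ => (pA (↑s) n : ℝ) -
        (1 / ∏ a ∈ s, (a : ℝ)) * (n : ℝ) ^ (k - 1) / (Nat.factorial (k - 1)))
      =O[atTop] (fun n : ℕ => (n : ℝ) ^ ((k : ℝ) - 2)) := by
  obtain ⟨C, hCnn, hbound⟩ := pA_main k s hk.symm hpos hgcd
  have hPpos : (0:ℝ) < ∏ a ∈ s, (a:ℝ) :=
    Finset.prod_pos (fun b hb => by exact_mod_cast hpos b hb)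
  have hFpos : (0:ℝ) < (Nat.factorial (k-1) : ℝ) := by positivity
  have hrw : ∀ n : ℕ, (1 / ∏ a ∈ s, (a:ℝ)) * (n:ℝ)^(k-1) / (Nat.factorial (k-1) : ℝ)
      = (n:ℝ)^(k-1) / ((Nat.factorial (k-1) : ℝ) * ∏ a ∈ s, (a:ℝ)) := by
    intro n
    rw [one_div, inv_mul_eq_div, div_div, mul_comm]
  have hk1' : 1 ≤ k := by
    rw [hk]
    exact Finset.card_pos.mpr hs
  rcases eq_or_ne k 1 with hk1 | hk1
  · rw [isBigO_iff]
    refine ⟨0, Filter.Eventually.of_forall (fun n => ?_)⟩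
    have hb := hbound n
    rw [if_pos hk1, mul_zero] at hb
    have hzero : (pA (↑s) n : ℝ) - (n:ℝ)^(k-1)/((Nat.factorial (k-1) : ℝ) * ∏ b ∈ s, (b:ℝ)) = 0 :=
      abs_eq_zero.mp (le_antisymm hb (abs_nonneg _))
    simp only [Real.norm_eq_abs, hrw n, hzero, abs_zero, zero_mul]
    exact le_refl _
  · have hk2 : 2 ≤ k := by omega
    rw [isBigO_iff]
    refine ⟨C * 2^(k-2), ?_⟩
    filter_upwards [Filter.eventually_ge_atTop 1] with n hn
    have hn1 : (1:ℝ) ≤ (n:ℝ) := by exact_mod_cast hn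
    have hb := hbound n
    rw [if_neg hk1] at hb
    have h2n : ((n:ℝ)+1)^(k-2) ≤ 2^(k-2) * (n:ℝ)^(k-2) := by
      rw [← mul_pow]
      exact pow_le_pow_left₀ (by positivity) (by linarith) _
    have hcast : (n:ℝ) ^ ((k:ℝ)-2) = (n:ℝ)^((k-2 : ℕ)) := by
      rw [show ((k:ℝ)-2) = (((k-2 : ℕ)) : ℝ) by push_cast [Nat.cast_sub hk2]; ring]
      exact Real.rpow_natCast _ _
    have hgnorm : |(n:ℝ) ^ ((k:ℝ)-2)| = (n:ℝ)^((k-2:ℕ)) := by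
      rw [hcast, abs_of_nonneg (by positivity)]
    simp only [Real.norm_eq_abs, hrw n]
    rw [hgnorm]
    calc |(pA (↑s) n : ℝ) - (n:ℝ)^(k-1)/((Nat.factorial (k-1) : ℝ) * ∏ b ∈ s, (b:ℝ))|
        ≤ C * (((n:ℝ)+1)^(k-2)) := hb
      _ ≤ C * (2^(k-2) * (n:ℝ)^(k-2)) := mul_le_mul_of_nonneg_left h2n hCnn
      _ = C * 2^(k-2) * (n:ℝ)^(k-2) := by ring
end

section
/- Let n₀ be a positive integer and let A be the set of all integers greater than or equal to n₀. Then p_A(n) ≤ p_A(n+1) for all positive integers n, and p_A(n) < p_A(n+1) for all n ≥ 3n₀ + 2. -/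
open Filter Asymptotics Real

private lemma msup_mem (s : Multiset ℕ) (hs : s ≠ 0) : s.sup ∈ s := by
  induction s using Multiset.induction with
  | empty => simp at hs
  | cons a t ih =>
    rcases eq_or_ne t 0 with rfl | ht
    · simp
    · rcases le_total a t.sup with h | h
      · rw [Multiset.sup_cons, sup_eq_right.mpr h]
        exact Multiset.mem_cons_of_mem (ih ht)
      · rw [Multiset.sup_cons, sup_eq_left.mpr h]
        exact Multiset.mem_cons_self a t

private lemma parts_ne {n : ℕ} (hn : 0 < n) (p : n.Partition) : p.parts ≠ 0 := by
  intro h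
  have := p.parts_sum
  rw [h] at this
  simp at this
  omega

/-- Bump: add one to a largest part. -/
noncomputable def bump {n : ℕ} (hn : 0 < n) (p : n.Partition) : (n + 1).Partition where
  parts := (p.parts.sup + 1) ::ₘ p.parts.erase p.parts.sup
  parts_pos := by
    intro a ha
    rcases Multiset.mem_cons.mp ha with rfl | ha
    · omega
    · exact p.parts_pos (Multiset.mem_of_mem_erase ha)
  parts_sum := by
    have hmem : p.parts.sup ∈ p.parts := msup_mem _ (parts_ne hn p)
    have h := congrArg Multiset.sum (Multiset.cons_erase hmem)
    rw [Multiset.sum_cons] at h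
    rw [Multiset.sum_cons]
    rw [p.parts_sum] at h
    omega

private lemma bump_parts {n : ℕ} (hn : 0 < n) (p : n.Partition) :
    (bump hn p).parts = (p.parts.sup + 1) ::ₘ p.parts.erase p.parts.sup := rfl

private lemma bump_sup {n : ℕ} (hn : 0 < n) (p : n.Partition) :
    (bump hn p).parts.sup = p.parts.sup + 1 := by
  rw [bump_parts, Multiset.sup_cons, sup_eq_left]
  calc (p.parts.erase p.parts.sup).sup ≤ p.parts.sup :=
        Multiset.sup_le.mpr fun b hb => Multiset.le_sup (Multiset.mem_of_mem_erase hb)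
    _ ≤ p.parts.sup + 1 := by omega

private lemma bump_count {n : ℕ} (hn : 0 < n) (p : n.Partition) :
    (bump hn p).parts.count ((bump hn p).parts.sup) = 1 := by
  rw [bump_sup, bump_parts]
  simp only [Multiset.count_cons_self]
  have : (p.parts.erase p.parts.sup).count (p.parts.sup + 1) = 0 := by
    rw [Multiset.count_eq_zero]
    intro hmem
    have := Multiset.le_sup (Multiset.mem_of_mem_erase hmem)
    omega
  omega

private lemma bump_inj {n : ℕ} (hn : 0 < n) : Function.Injective (bump hn) := by
  intro p q hpq
  have h : (bump hn p).parts = (bump hn q).parts := by rw [hpq]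
  have hsup : p.parts.sup = q.parts.sup := by
    have := congrArg Multiset.sup h
    rw [bump_sup, bump_sup] at this
    omega
  rw [bump_parts, bump_parts, hsup] at h
  have herase : p.parts.erase q.parts.sup = q.parts.erase q.parts.sup :=
    (Multiset.cons_inj_right (q.parts.sup + 1)).mp h
  apply Nat.Partition.ext
  rw [← Multiset.cons_erase (msup_mem p.parts (parts_ne hn p)),
      ← Multiset.cons_erase (msup_mem q.parts (parts_ne hn q)), hsup, herase]

/-- Bump restricted to partitions with parts at least `n₀`. -/
noncomputable def bumpA (n₀ : ℕ) {n : ℕ} (hn : 0 < n)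
    (p : {p : n.Partition // ∀ a ∈ p.parts, a ∈ {m : ℕ | n₀ ≤ m}}) :
    {p : (n + 1).Partition // ∀ a ∈ p.parts, a ∈ {m : ℕ | n₀ ≤ m}} := by
  refine ⟨bump hn p.1, ?_⟩
  intro a ha
  rw [bump_parts] at ha
  rcases Multiset.mem_cons.mp ha with rfl | ha
  · have hmem : p.1.parts.sup ∈ p.1.parts := msup_mem _ (parts_ne hn p.1)
    have := p.2 _ hmem
    simp only [Set.mem_setOf_eq] at this ⊢
    omega
  · exact p.2 _ (Multiset.mem_of_mem_erase ha)

private lemma bumpA_val (n₀ : ℕ) {n : ℕ} (hn : 0 < n)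
    (p : {p : n.Partition // ∀ a ∈ p.parts, a ∈ {m : ℕ | n₀ ≤ m}}) :
    (bumpA n₀ hn p).1 = bump hn p.1 := rfl

private lemma bumpA_inj (n₀ : ℕ) {n : ℕ} (hn : 0 < n) :
    Function.Injective (bumpA n₀ (n := n) hn) := by
  intro p q hpq
  have : bump hn p.1 = bump hn q.1 := by
    rw [← bumpA_val n₀ hn p, ← bumpA_val n₀ hn q, hpq]
  exact Subtype.ext (bump_inj hn this)

theorem partition_tail_set_increasing (n₀ : ℕ) (hn₀ : 0 < n₀) :
    (∀ n : ℕ, 0 < n → pA {m : ℕ | n₀ ≤ m} n ≤ pA {m : ℕ | n₀ ≤ m} (n + 1)) ∧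
    (∀ n : ℕ, 3 * n₀ + 2 ≤ n → pA {m : ℕ | n₀ ≤ m} n < pA {m : ℕ | n₀ ≤ m} (n + 1)) := by
  classical
  constructor
  · intro n hn
    exact Nat.card_le_card_of_injective (bumpA n₀ hn) (bumpA_inj n₀ hn)
  · intro n hn
    have hn' : 0 < n := by omega
    -- construct a partition of n+1 with repeated maximum
    set c : ℕ := n₀ + (n + 1 + n₀) % 2 with hc
    have hc2 : (n + 1 - c) % 2 = 0 := by omega
    set a : ℕ := (n + 1 - c) / 2 with ha
    have hac : c ≤ a := by omega
    have han : n₀ ≤ c := by omega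
    have hsum : a + (a + (c + 0)) = n + 1 := by omega
    set q : (n + 1).Partition :=
      ⟨a ::ₘ a ::ₘ {c}, by
        intro i hi
        simp only [Multiset.mem_cons, Multiset.mem_singleton] at hi
        rcases hi with rfl | rfl | rfl <;> omega, by
        simpa using hsum⟩ with hq
    have hqparts : q.parts = a ::ₘ a ::ₘ {c} := rfl
    have hqmem : ∀ i ∈ q.parts, i ∈ {m : ℕ | n₀ ≤ m} := by
      intro i hi
      rw [hqparts] at hi
      simp only [Multiset.mem_cons, Multiset.mem_singleton] at hi
      simp only [Set.mem_setOf_eq]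
      rcases hi with rfl | rfl | rfl <;> omega
    have hqsup : q.parts.sup = a := by
      rw [hqparts]
      simp only [Multiset.sup_cons, Multiset.sup_singleton]
      rw [sup_eq_left.mpr hac, sup_idem]
    have hqcount : 2 ≤ q.parts.count (q.parts.sup) := by
      rw [hqsup, hqparts]
      simp [Multiset.count_cons_self]
    -- q is not in the range of bumpA
    have hnotmem : (⟨q, hqmem⟩ : {p : (n+1).Partition // ∀ a ∈ p.parts, a ∈ {m : ℕ | n₀ ≤ m}}) ∉
        Set.range (bumpA n₀ hn') := by
      rintro ⟨p, hp⟩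
      have hparts : (bump hn' p.1).parts = q.parts := by
        rw [← bumpA_val n₀ hn' p, hp]
      have h1 := bump_count hn' p.1
      rw [hparts] at h1
      omega
    haveI : Fintype {p : n.Partition // ∀ a ∈ p.parts, a ∈ {m : ℕ | n₀ ≤ m}} :=
      Fintype.ofFinite _
    haveI : Fintype {p : (n+1).Partition // ∀ a ∈ p.parts, a ∈ {m : ℕ | n₀ ≤ m}} :=
      Fintype.ofFinite _
    rw [pA, pA, Nat.card_eq_fintype_card, Nat.card_eq_fintype_card]
    exact Fintype.card_lt_of_injective_of_notMem (bumpA n₀ hn') (bumpA_inj n₀ hn') hnotmem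
end
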